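/- arXiv:2205.04309 — 6 statements merged into one kernel-verified Lean document; each statement's English description precedes it below -/
import Mathlib

section
/- Let val : C^ω → X be a C-valuation such that for every cardinal κ there exists a completely well-monotonic (κ,val)-universal C-graph. Then val is positional. -/
/-!
Common vocabulary: graphs as edge relations `E : V → C → V → Prop` (a `C`-graph
additionally has no sinks), infinite paths and their colorations, valuations,
values of vertices, morphisms, universality, monotonic graphs, games,
strategies, positional strategies and positionality, neutral colors.
-/

universe u v w

section Prelim

variable {C : Type} {X : Type}

/-- A `C`-graph (as an edge relation) has no sinks. -/
def NoSinks {V : Type v} (E : V → C → V → Prop) : Prop :=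
  ∀ a : V, ∃ (c : C) (b : V), E a c b

/-- `InfPath E a w` : there is an infinite path from `a` with coloration `w`. -/
def InfPath {V : Type v} (E : V → C → V → Prop) (a : V) (w : ℕ → C) : Prop :=
  ∃ ρ : ℕ → V, ρ 0 = a ∧ ∀ i, E (ρ i) (w i) (ρ (i + 1))

/-- The value of a vertex in a graph: supremum of values of colorations of
infinite paths from it. -/
noncomputable def vval {V : Type v} [CompleteLinearOrder X]
    (val : (ℕ → C) → X) (E : V → C → V → Prop) (a : V) : X :=
  sSup (val '' {w | InfPath E a w})

/-- Morphisms of `C`-graphs. -/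
def IsMorphism {V : Type v} {V' : Type w} (E : V → C → V → Prop)
    (E' : V' → C → V' → Prop) (φ : V → V') : Prop :=
  ∀ ⦃a : V⦄ ⦃c : C⦄ ⦃b : V⦄, E a c b → E' (φ a) c (φ b)

/-- `val`-preserving morphisms of `C`-graphs. -/
def ValPreserving {V : Type v} {V' : Type w} [CompleteLinearOrder X]
    (val : (ℕ → C) → X) (E : V → C → V → Prop) (E' : V' → C → V' → Prop)
    (φ : V → V') : Prop :=
  IsMorphism E E' φ ∧ ∀ a : V, vval val E' (φ a) = vval val E a

/-- Left composition: `a ≥ b → (b →c d) → (a →c d)`. -/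
def LeftComp {L : Type v} [LinearOrder L] (M : L → C → L → Prop) : Prop :=
  ∀ ⦃a b : L⦄ ⦃c : C⦄ ⦃d : L⦄, b ≤ a → M b c d → M a c d

/-- Right composition: `(a →c b) → b ≥ d → (a →c d)`. -/
def RightComp {L : Type v} [LinearOrder L] (M : L → C → L → Prop) : Prop :=
  ∀ ⦃a : L⦄ ⦃c : C⦄ ⦃b d : L⦄, M a c b → d ≤ b → M a c d

/-- A monotonic graph over a linearly ordered vertex set. -/
def Monotonic {L : Type v} [LinearOrder L] (M : L → C → L → Prop) : Prop :=
  LeftComp M ∧ RightComp M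

/-- Every vertex has a `c`-predecessor, for every color `c`. -/
def CompletePreds {L : Type v} (M : L → C → L → Prop) : Prop :=
  ∀ (c : C) (l : L), ∃ p : L, M p c l

/-- `CWM C L M` : `M` is a completely well-monotonic `C`-graph over `L`:
monotonic, without sinks, well-ordered, a complete lattice, and with all
`c`-predecessors. -/
def CWM (C : Type) (L : Type v) [LinearOrder L] (M : L → C → L → Prop) : Prop :=
  Monotonic M ∧ NoSinks M ∧ WellFounded ((· < ·) : L → L → Prop) ∧
    (∀ A : Set L, ∃ a : L, IsLUB A a) ∧ CompletePreds M

/-- `(κ, val)`-universality: every `C`-graph with fewer than `κ` vertices has a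
`val`-preserving morphism into `M`. -/
def Universal {L : Type v} [CompleteLinearOrder X] (val : (ℕ → C) → X)
    (κ : Cardinal.{u}) (M : L → C → L → Prop) : Prop :=
  ∀ (V : Type u) (E : V → C → V → Prop), NoSinks E → Cardinal.mk V < κ →
    ∃ φ : V → L, ValPreserving val E M φ

/-! Histories: finite paths from `v₀`, stored as lists of steps `(c, x)`,
most recent step first. -/

/-- Last vertex of a history. -/
def lastV {V : Type v} (v₀ : V) : List (C × V) → V
  | [] => v₀
  | (_, x) :: _ => x

/-- Validity of a history with respect to the graph `E` and start vertex `v₀`. -/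
def ValidPath {V : Type v} (E : V → C → V → Prop) (v₀ : V) : List (C × V) → Prop
  | [] => True
  | (c, x) :: rest => ValidPath E v₀ rest ∧ E (lastV v₀ rest) c x

/-- A strategy (for Eve) from `v₀` in the game `(E, VEve, val)` : a subgraph
`(H, F)` of the unfolding of `E` from `v₀`, containing the empty history,
without sinks, and closed under all extensions at Adam vertices. -/
structure Strategy {V : Type v} (E : V → C → V → Prop) (VEve : Set V) (v₀ : V) where
  H : Set (List (C × V))
  F : List (C × V) → C → List (C × V) → Prop
  valid : ∀ π ∈ H, ValidPath E v₀ π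
  nil_mem : [] ∈ H
  F_sub : ∀ ⦃π : List (C × V)⦄ ⦃c : C⦄ ⦃π' : List (C × V)⦄,
    F π c π' → π ∈ H ∧ π' ∈ H ∧ ∃ x : V, π' = (c, x) :: π
  no_sink : ∀ π ∈ H, ∃ (c : C) (π' : List (C × V)), F π c π'
  adam_closed : ∀ π ∈ H, lastV v₀ π ∉ VEve →
    ∀ (c : C) (x : V), E (lastV v₀ π) c x → ((c, x) :: π) ∈ H ∧ F π c ((c, x) :: π)

/-- The value of a strategy: supremum of values of colorations of infinite
paths from the empty history in the strategy. -/
noncomputable def Strategy.value {V : Type v} [CompleteLinearOrder X]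
    (val : (ℕ → C) → X) {E : V → C → V → Prop} {VEve : Set V} {v₀ : V}
    (S : Strategy E VEve v₀) : X :=
  sSup (val '' {w | ∃ ρ : ℕ → List (C × V), ρ 0 = [] ∧ ∀ i, S.F (ρ i) (w i) (ρ (i + 1))})

/-- The value of a vertex in a game: infimum of values of strategies from it. -/
noncomputable def gameValue {V : Type v} [CompleteLinearOrder X] (val : (ℕ → C) → X)
    (E : V → C → V → Prop) (VEve : Set V) (v₀ : V) : X :=
  ⨅ S : Strategy E VEve v₀, S.value val

/-- A positional strategy: a subgraph of `E` over all vertices keeping all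
outgoing edges of Adam vertices. -/
structure PosStrategy {V : Type v} (E : V → C → V → Prop) (VEve : Set V) where
  F : V → C → V → Prop
  sub : ∀ ⦃a : V⦄ ⦃c : C⦄ ⦃b : V⦄, F a c b → E a c b
  no_sink : NoSinks F
  adam_all : ∀ a : V, a ∉ VEve → ∀ (c : C) (b : V), E a c b → F a c b

/-- The value of a positional strategy from a vertex. -/
noncomputable def PosStrategy.value {V : Type v} [CompleteLinearOrder X]
    (val : (ℕ → C) → X) {E : V → C → V → Prop} {VEve : Set V}
    (P : PosStrategy E VEve) (v₀ : V) : X :=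
  vval val P.F v₀

/-- Optimality of a positional strategy. -/
def PosStrategy.Optimal {V : Type v} [CompleteLinearOrder X]
    (val : (ℕ → C) → X) {E : V → C → V → Prop} {VEve : Set V}
    (P : PosStrategy E VEve) : Prop :=
  ∀ v₀ : V, P.value val v₀ = gameValue val E VEve v₀

/-- A valuation is positional if every game with this valuation admits an
optimal positional strategy. -/
def Positional [CompleteLinearOrder X] (val : (ℕ → C) → X) : Prop :=
  ∀ (V : Type u) (E : V → C → V → Prop), NoSinks E → ∀ VEve : Set V,
    ∃ P : PosStrategy E VEve, P.Optimal val

/-! Words and neutral colors. -/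

/-- Concatenation of a finite word with an infinite word. -/
def wcat (u : List C) (w : ℕ → C) : ℕ → C := fun i =>
  if h : i < u.length then u.get ⟨i, h⟩ else w (i - u.length)

/-- `w'` is obtained from `w` by inserting finitely many `e`'s between
consecutive letters (and before the first letter):
`w' = e^{n₀} w₀ e^{n₁} w₁ ⋯`. -/
def IsEpsInsertion (e : C) (w w' : ℕ → C) : Prop :=
  ∃ σ : ℕ → ℕ, StrictMono σ ∧ (∀ k, w' (σ k) = w k) ∧ ∀ i, i ∉ Set.range σ → w' i = e

/-- `e` is a neutral color for `val`. -/
def Neutral [CompleteLinearOrder X] (val : (ℕ → C) → X) (e : C) : Prop :=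
  ∀ w w' : ℕ → C, IsEpsInsertion e w w' → val w' = val w

/-- `e` is eventually good for Eve. -/
def EvGoodForEve [CompleteLinearOrder X] (val : (ℕ → C) → X) (e : C) : Prop :=
  ∀ u : List C, val (wcat u fun _ => e) = ⨅ z : ℕ → C, val (wcat u z)

/-- `e` is strongly neutral for `val`. -/
def StronglyNeutral [CompleteLinearOrder X] (val : (ℕ → C) → X) (e : C) : Prop :=
  Neutral val e ∧ EvGoodForEve val e

/-- Prefix-increasing valuations. -/
def PrefixIncreasing [CompleteLinearOrder X] (val : (ℕ → C) → X) : Prop :=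
  ∀ (u : List C) (w : ℕ → C), val w ≤ val (wcat u w)

/-! Objectives. -/

/-- The valuation (into the two-element complete linear order `Prop`,
`⊥ = False`, `⊤ = True`) associated with an objective `W`: winning words have
value `⊥`. -/
def toVal (W : Set (ℕ → C)) : (ℕ → C) → Prop := fun w => w ∉ W

/-- A vertex satisfies the objective `W` if every coloration of an infinite
path from it belongs to `W`. -/
def Sat {V : Type v} (W : Set (ℕ → C)) (E : V → C → V → Prop) (a : V) : Prop :=
  ∀ w : ℕ → C, InfPath E a w → w ∈ W

/-- Prefix-invariant objectives. -/
def PrefixInvariant (W : Set (ℕ → C)) : Prop :=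
  ∀ (u : List C) (w : ℕ → C), wcat u w ∈ W ↔ w ∈ W

/-- The completion `L^⊤` of a monotonic graph: a new top vertex with all
outgoing edges is added. -/
def completionE {L : Type v} (M : L → C → L → Prop) :
    WithTop L → C → WithTop L → Prop := fun x c y =>
  x = ⊤ ∨ ∃ a b : L, x = (a : WithTop L) ∧ y = (b : WithTop L) ∧ M a c b

/-- A graph has sufficiently many `e`-edges if `→e` is "well-founded" in the
sense that every nonempty set of vertices contains a vertex `a` with `b →e a`
for all `b` in the set. -/
def SuffEps {V : Type v} (E : V → C → V → Prop) (e : C) : Prop :=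
  ∀ A : Set V, A.Nonempty → ∃ a ∈ A, ∀ b ∈ A, E b e a

end Prelim

section AuxProof

variable {C X : Type} [CompleteLinearOrder X] {V : Type u}

/-- Histories following a positional strategy. -/
def Follows {E : V → C → V → Prop} {VEve : Set V} (P : PosStrategy E VEve) (v₀ : V) :
    List (C × V) → Prop
  | [] => True
  | (c, x) :: rest => Follows P v₀ rest ∧ P.F (lastV v₀ rest) c x

lemma follows_valid {E : V → C → V → Prop} {VEve : Set V} (P : PosStrategy E VEve)
    (v₀ : V) : ∀ π, Follows P v₀ π → ValidPath E v₀ π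
  | [], _ => trivial
  | (_, _) :: rest, h => ⟨follows_valid P v₀ rest h.1, P.sub h.2⟩

/-- The strategy induced by a positional strategy. -/
def posToStrat {E : V → C → V → Prop} {VEve : Set V} (P : PosStrategy E VEve) (v₀ : V) :
    Strategy E VEve v₀ where
  H := {π | Follows P v₀ π}
  F := fun π c π' => Follows P v₀ π ∧ ∃ x, π' = (c, x) :: π ∧ P.F (lastV v₀ π) c x
  valid := fun π hπ => follows_valid P v₀ π hπ
  nil_mem := trivial
  F_sub := by
    rintro π c π' ⟨hπ, x, rfl, hPf⟩
    exact ⟨hπ, ⟨hπ, hPf⟩, x, rfl⟩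
  no_sink := by
    intro π hπ
    obtain ⟨c, x, hcx⟩ := P.no_sink (lastV v₀ π)
    exact ⟨c, (c, x) :: π, hπ, x, rfl, hcx⟩
  adam_closed := by
    intro π hπ hA c x hcx
    have hPf := P.adam_all _ hA c x hcx
    exact ⟨⟨hπ, hPf⟩, hπ, x, rfl, hPf⟩

lemma posToStrat_value_le (val : (ℕ → C) → X) {E : V → C → V → Prop} {VEve : Set V}
    (P : PosStrategy E VEve) (v₀ : V) :
    (posToStrat P v₀).value val ≤ P.value val v₀ := by
  apply sSup_le_sSup
  apply Set.image_mono
  rintro w ⟨ρ, h0, hstep⟩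
  refine ⟨fun i => lastV v₀ (ρ i), by show lastV v₀ (ρ 0) = v₀; rw [h0]; rfl, fun i => ?_⟩
  obtain ⟨-, x, hx, hPf⟩ := hstep i
  show P.F (lastV v₀ (ρ i)) (w i) (lastV v₀ (ρ (i + 1)))
  rw [hx]
  exact hPf

lemma vval_mono (val : (ℕ → C) → X) {L : Type u} [LinearOrder L] {M : L → C → L → Prop}
    (hM : LeftComp M) {l l' : L} (h : l ≤ l') : vval val M l ≤ vval val M l' := by
  apply sSup_le_sSup
  apply Set.image_mono
  rintro w ⟨ρ, h0, hstep⟩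
  refine ⟨fun i => match i with | 0 => l' | (j+1) => ρ (j+1), rfl, fun i => ?_⟩
  match i with
  | 0 => exact hM h (h0 ▸ hstep 0)
  | (j+1) => exact hstep (j+1)

/-- A strategy together with its start vertex. -/
structure BS (E : V → C → V → Prop) (VEve : Set V) where
  v0 : V
  S : Strategy E VEve v0

/-- The disjoint union of all strategy trees (with junk loops outside the
trees to avoid sinks). -/
def unionF (E : V → C → V → Prop) (VEve : Set V) :
    BS E VEve × List (C × V) → C → BS E VEve × List (C × V) → Prop :=
  fun x c y => (y.1 = x.1 ∧ x.1.S.F x.2 c y.2) ∨ x.2 ∉ x.1.S.H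

lemma noSinks_unionF {E : V → C → V → Prop} {VEve : Set V} (hE : NoSinks E) :
    NoSinks (unionF E VEve) := by
  rintro ⟨b, π⟩
  by_cases hπ : π ∈ b.S.H
  · obtain ⟨c, π', hF⟩ := b.S.no_sink π hπ
    exact ⟨c, (b, π'), Or.inl ⟨rfl, hF⟩⟩
  · obtain ⟨c, -, -⟩ := hE b.v0
    exact ⟨c, (b, π), Or.inr hπ⟩

/-- The full unfolding as a strategy. -/
def fullStrat {E : V → C → V → Prop} (VEve : Set V) (hE : NoSinks E) (v₀ : V) :
    Strategy E VEve v₀ where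
  H := {π | ValidPath E v₀ π}
  F := fun π c π' => ValidPath E v₀ π ∧ ∃ x, π' = (c, x) :: π ∧ E (lastV v₀ π) c x
  valid := fun _ hπ => hπ
  nil_mem := trivial
  F_sub := by rintro π c π' ⟨hπ, x, rfl, hx⟩; exact ⟨hπ, ⟨hπ, hx⟩, x, rfl⟩
  no_sink := by
    intro π hπ
    obtain ⟨c, x, hcx⟩ := hE (lastV v₀ π)
    exact ⟨c, (c, x) :: π, hπ, x, rfl, hcx⟩
  adam_closed := fun π hπ _ c x hcx => ⟨⟨hπ, hcx⟩, hπ, x, rfl, hcx⟩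

lemma unionF_value (val : (ℕ → C) → X) {E : V → C → V → Prop} {VEve : Set V}
    (b : BS E VEve) :
    vval val (unionF E VEve) (b, ([] : List (C × V))) = b.S.value val := by
  have hset : {w : ℕ → C | InfPath (unionF E VEve) (b, ([] : List (C × V))) w}
      = {w | ∃ ρ : ℕ → List (C × V), ρ 0 = [] ∧ ∀ i, b.S.F (ρ i) (w i) (ρ (i + 1))} := by
    ext w
    constructor
    · rintro ⟨ρT, h0, hstep⟩
      have aux : ∀ i, (ρT i).1 = b ∧ (ρT i).2 ∈ (ρT i).1.S.H := by
        intro i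
        induction i with
        | zero => rw [h0]; exact ⟨rfl, b.S.nil_mem⟩
        | succ j ih =>
          rcases hstep j with ⟨h1, h2⟩ | hn
          · refine ⟨h1.trans ih.1, ?_⟩
            rw [h1]
            exact ((ρT j).1.S.F_sub h2).2.1
          · exact absurd ih.2 hn
      refine ⟨fun i => (ρT i).2, by show (ρT 0).2 = []; rw [h0], fun i => ?_⟩
      rcases hstep i with ⟨h1, h2⟩ | hn
      · rw [(aux i).1] at h2
        exact h2
      · exact absurd (aux i).2 hn
    · rintro ⟨ρ, h0, hstep⟩
      exact ⟨fun i => (b, ρ i), by show ((b, ρ 0) : BS E VEve × List (C × V)) = (b, []); rw [h0], fun i => Or.inl ⟨rfl, hstep i⟩⟩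
  unfold vval Strategy.value
  rw [hset]

end AuxProof

/-- Theorem 3.1 / "Structure implies Positionality".
Let `val : C^ω → X` be a valuation such that for every cardinal `κ` there
exists a completely well-monotonic `(κ, val)`-universal graph.  Then `val` is
positional. -/
theorem stmt0 {C X : Type} [CompleteLinearOrder X] (val : (ℕ → C) → X)
    (h : ∀ κ : Cardinal.{u}, ∃ (L : Type u) (li : LinearOrder L)
      (M : L → C → L → Prop), @CWM C L li M ∧ Universal val κ M) :
    Positional.{u} val := by
  intro V E hE VEve
  obtain ⟨L, li, M, hcwm, huniv⟩ :=
    h (Order.succ (Cardinal.mk (BS E VEve × List (C × V))))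
  letI := li
  obtain ⟨φ, hmor, hpres⟩ :=
    huniv _ (unionF E VEve) (noSinks_unionF hE) (Order.lt_succ_of_not_isMax (not_isMax _))
  obtain ⟨⟨hLC, hRC⟩, -, hwf, -, -⟩ := hcwm
  let A : V → Set L := fun v =>
    {l | ∃ t : BS E VEve × List (C × V), t.2 ∈ t.1.S.H ∧ lastV t.1.v0 t.2 = v ∧ φ t = l}
  have hne : ∀ v, (A v).Nonempty := fun v =>
    ⟨φ (⟨v, fullStrat VEve hE v⟩, []), (⟨v, fullStrat VEve hE v⟩, []), trivial, rfl, rfl⟩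
  let ψ : V → L := fun v => hwf.min (A v) (hne v)
  have hmem : ∀ v, ψ v ∈ A v := fun v => hwf.min_mem _ _
  have hle : ∀ v, ∀ l ∈ A v, ψ v ≤ l := fun v l hl => not_lt.mp (hwf.not_lt_min _ hl)
  have key : ∀ (v : V) (c : C) (x : V) (t : BS E VEve × List (C × V)),
      t.2 ∈ t.1.S.H → lastV t.1.v0 t.2 = v → φ t = ψ v →
      t.1.S.F t.2 c ((c, x) :: t.2) → E v c x ∧ M (ψ v) c (ψ x) := by
    intro v c x t ht hlast hphi hF
    have hmem' : ((c, x) :: t.2) ∈ t.1.S.H := (t.1.S.F_sub hF).2.1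
    have hvalid : ValidPath E t.1.v0 ((c, x) :: t.2) := t.1.S.valid _ hmem'
    have hMor : M (φ t) c (φ (t.1, (c, x) :: t.2)) := hmor (Or.inl ⟨rfl, hF⟩)
    refine ⟨hlast ▸ hvalid.2, ?_⟩
    exact hRC (hphi ▸ hMor) (hle x _ ⟨(t.1, (c, x) :: t.2), hmem', rfl, rfl⟩)
  have hns : NoSinks (fun a c b => E a c b ∧ M (ψ a) c (ψ b)) := by
    intro a
    obtain ⟨t, ht, hlast, hphi⟩ := hmem a
    obtain ⟨c, π', hF⟩ := t.1.S.no_sink t.2 ht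
    obtain ⟨-, -, x, rfl⟩ := t.1.S.F_sub hF
    exact ⟨c, x, key a c x t ht hlast hphi hF⟩
  have had : ∀ a : V, a ∉ VEve → ∀ (c : C) (b : V), E a c b →
      E a c b ∧ M (ψ a) c (ψ b) := by
    intro a ha c b hEb
    obtain ⟨t, ht, hlast, hphi⟩ := hmem a
    have hAd := t.1.S.adam_closed t.2 ht (by rw [hlast]; exact ha) c b
      (by rw [hlast]; exact hEb)
    exact key a c b t ht hlast hphi hAd.2
  let P : PosStrategy E VEve :=
    { F := fun a c b => E a c b ∧ M (ψ a) c (ψ b)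
      sub := fun a c b hb => hb.1
      no_sink := hns
      adam_all := had }
  refine ⟨P, fun v₀ => le_antisymm ?_ ?_⟩
  · have h1 : vval val (fun a c b => E a c b ∧ M (ψ a) c (ψ b)) v₀ ≤ vval val M (ψ v₀) := by
      apply sSup_le_sSup
      apply Set.image_mono
      rintro w ⟨ρ, h0, hstep⟩
      exact ⟨fun i => ψ (ρ i), by show ψ (ρ 0) = ψ v₀; rw [h0], fun i => (hstep i).2⟩
    refine h1.trans (le_iInf fun S => ?_)
    have h2 : ψ v₀ ≤ φ (⟨v₀, S⟩, []) := hle v₀ _ ⟨(⟨v₀, S⟩, []), S.nil_mem, rfl, rfl⟩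
    calc vval val M (ψ v₀) ≤ vval val M (φ (⟨v₀, S⟩, [])) := vval_mono val hLC h2
      _ = vval val (unionF E VEve) (⟨v₀, S⟩, []) := hpres _
      _ = S.value val := unionF_value val ⟨v₀, S⟩
  · exact (iInf_le _ (posToStrat P v₀)).trans (posToStrat_value_le val P v₀)
end

section
/- Let val : C^ω → X be a positional C-valuation admitting a strongly neutral color, and let G be a C-graph. Then there exists a completely well-monotonic C-graph G' and a val-preserving morphism from G to G'. -/
/-!
Common vocabulary: graphs as edge relations `E : V → C → V → Prop` (a `C`-graph
additionally has no sinks), infinite paths and their colorations, valuations,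
values of vertices, morphisms, universality, monotonic graphs, games,
strategies, positional strategies and positionality, neutral colors.
-/

universe u v w

section Stmt1Aux

variable {C X : Type} [CompleteLinearOrder X] {val : (ℕ → C) → X} {e : C}

theorem val_le_vval {V : Type v} {E : V → C → V → Prop} {a : V} {w : ℕ → C}
    (h : InfPath E a w) : val w ≤ vval val E a :=
  le_sSup ⟨w, h, rfl⟩

theorem vval_le {V : Type v} {E : V → C → V → Prop} {a : V} {x : X}
    (h : ∀ w, InfPath E a w → val w ≤ x) : vval val E a ≤ x :=
  sSup_le (by rintro y ⟨w, hw, rfl⟩; exact h w hw)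

theorem vval_mono_s1 {V : Type v} {E₁ E₂ : V → C → V → Prop}
    (h : ∀ ⦃a c b⦄, E₁ a c b → E₂ a c b) (a : V) : vval val E₁ a ≤ vval val E₂ a :=
  vval_le fun w ⟨ρ, h0, hs⟩ => val_le_vval ⟨ρ, h0, fun i => h (hs i)⟩

theorem exists_infPath {V : Type v} {E : V → C → V → Prop} (hE : NoSinks E) (a : V) :
    ∃ w, InfPath E a w := by
  choose c b hcb using hE
  exact ⟨fun n => c (b^[n] a), fun n => b^[n] a, rfl,
    fun i => by simp only []; rw [Function.iterate_succ_apply']; exact hcb _⟩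

/-- The key "deletion" lemma: a walk allowed to stall on `e`-steps has value
at most the value of its starting vertex. -/
theorem core {V : Type v} {E : V → C → V → Prop} (hE : NoSinks E)
    (hne : Neutral val e) (hev : EvGoodForEve val e)
    (p : ℕ → V) (w : ℕ → C)
    (hstep : ∀ n, E (p n) (w n) (p (n + 1)) ∨ (w n = e ∧ p (n + 1) = p n)) :
    val w ≤ vval val E (p 0) := by
  classical
  set R : ℕ → Prop := fun n => ¬(w n = e ∧ p (n + 1) = p n) with hRdef
  have hR : ∀ n, R n → E (p n) (w n) (p (n + 1)) := fun n h => (hstep n).resolve_right h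
  have hstat : ∀ n, ¬R n → w n = e ∧ p (n + 1) = p n := fun n h => not_not.1 h
  have pconst : ∀ a b : ℕ, a ≤ b → (∀ i, a ≤ i → i < b → ¬R i) → p b = p a := by
    intro a b hab h
    induction b, hab using Nat.le_induction with
    | base => rfl
    | succ b hab ih =>
      rw [(hstat b (h b hab (Nat.lt_succ_self b))).2,
        ih (fun i hi hib => h i hi (hib.trans (Nat.lt_succ_self b)))]
  by_cases hinf : (setOf R).Infinite
  · set σ := Nat.nth R with hσdef
    have hmono : StrictMono σ := Nat.nth_strictMono hinf
    have hrange : ∀ i, R i → ∃ k, σ k = i := by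
      intro i hi
      have : i ∈ Set.range (Nat.nth R) := by
        rw [Nat.range_nth_of_infinite hinf]; exact hi
      exact this
    have hnR : ∀ k i, σ k < i → i < σ (k + 1) → ¬R i := by
      intro k i h1 h2 hRi
      obtain ⟨j, hj⟩ := hrange i hRi
      rw [← hj] at h1 h2
      have hk : k < j := hmono.lt_iff_lt.1 h1
      have hk' : j < k + 1 := hmono.lt_iff_lt.1 h2
      omega
    have hnR0 : ∀ i, i < σ 0 → ¬R i := by
      intro i h1 hRi
      obtain ⟨j, hj⟩ := hrange i hRi
      rw [← hj] at h1
      exact absurd h1 (not_lt.2 (hmono.monotone (Nat.zero_le j)))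
    have hpath : InfPath E (p 0) (fun k => w (σ k)) := by
      refine ⟨fun k => p (σ k), (pconst 0 (σ 0) (Nat.zero_le _) fun i _ hi => hnR0 i hi), ?_⟩
      intro k
      have h1 : E (p (σ k)) (w (σ k)) (p (σ k + 1)) := hR _ (Nat.nth_mem_of_infinite hinf k)
      have h2 : p (σ (k + 1)) = p (σ k + 1) :=
        pconst (σ k + 1) (σ (k + 1)) (hmono (Nat.lt_succ_self k)) fun i hi hi' =>
          hnR k i (Nat.lt_of_succ_le hi) hi'
      simp only []
      rw [h2]; exact h1
    have hins : IsEpsInsertion e (fun k => w (σ k)) w := by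
      refine ⟨σ, hmono, fun k => rfl, ?_⟩
      intro i hi
      by_contra hwe
      have hRi : R i := fun hcon => hwe hcon.1
      obtain ⟨k, hk⟩ := hrange i hRi
      exact hi ⟨k, hk⟩
    calc val w = val (fun k => w (σ k)) := hne _ _ hins
      _ ≤ vval val E (p 0) := val_le_vval hpath
  · have hfin : (setOf R).Finite := Set.not_infinite.1 hinf
    obtain ⟨N, hN⟩ := hfin.bddAbove
    set N₀ := N + 1 with hN₀
    have hRlt : ∀ n, R n → n < N₀ := fun n hn => Nat.lt_succ_of_le (hN hn)
    set K := hfin.toFinset.card with hK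
    set σ : ℕ → ℕ := fun k => if k < K then Nat.nth R k else N₀ + (k - K) with hσdef
    have hnth_lt : ∀ k, k < K → Nat.nth R k < N₀ := fun k hk =>
      hRlt _ (Nat.nth_mem_of_lt_card hfin hk)
    have hmono : StrictMono σ := by
      intro i j hij
      simp only [hσdef]
      rcases lt_or_ge j K with hj | hj
      · rw [if_pos (hij.trans hj), if_pos hj]
        exact Nat.nth_lt_nth_of_lt_card hfin hij hj
      · rw [if_neg (not_lt.2 hj)]
        rcases lt_or_ge i K with hi | hi
        · rw [if_pos hi]
          exact lt_of_lt_of_le (hnth_lt i hi) (Nat.le_add_right _ _)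
        · rw [if_neg (not_lt.2 hi)]; omega
    have hsurj : ∀ i, R i → ∃ k, k < K ∧ Nat.nth R k = i := fun i hi =>
      ⟨Nat.count R i, Nat.count_lt_card hfin hi, Nat.nth_count hi⟩
    set ul : List C := List.ofFn (fun k : Fin K => w (Nat.nth R k)) with hul
    have hullen : ul.length = K := by simp [hul]
    have hwK : ∀ k, K ≤ k → wcat ul (fun _ => e) k = e := by
      intro k hk
      rw [wcat, dif_neg (by omega)]
    have hwlt : ∀ z : ℕ → C, ∀ k (h : k < K), wcat ul z k = w (Nat.nth R k) := by
      intro z k h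
      rw [wcat, dif_pos (by omega)]
      simp [hul]
    have hwge : ∀ z : ℕ → C, ∀ k, K ≤ k → wcat ul z k = z (k - K) := by
      intro z k h
      rw [wcat, dif_neg (by omega), hullen]
    have hins : IsEpsInsertion e (wcat ul (fun _ => e)) w := by
      refine ⟨σ, hmono, ?_, ?_⟩
      · intro k
        rcases lt_or_ge k K with hk | hk
        · rw [hwlt _ k hk]
          simp only [hσdef, if_pos hk]
        · rw [hwK k hk]
          have hnr : ¬ R (σ k) := by
            intro hR'
            have h1 := hRlt _ hR'
            simp only [hσdef, if_neg (not_lt.2 hk)] at h1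
            omega
          exact (hstat _ hnr).1
      · intro i hi
        by_contra hwe
        have hRi : R i := fun hcon => hwe hcon.1
        obtain ⟨k, hk, hnth⟩ := hsurj i hRi
        exact hi ⟨k, by simp only [hσdef, if_pos hk, hnth]⟩
    have hpN : ∀ m, N₀ ≤ m → p m = p N₀ := fun m hm =>
      (pconst N₀ m hm fun i hi _ hRi => by have := hRlt i hRi; omega)
    obtain ⟨z, ξ, hξ0, hξs⟩ := exists_infPath hE (p N₀)
    have hstart0 : K ≠ 0 → p (Nat.nth R 0) = p 0 := by
      intro hK0
      refine pconst 0 (Nat.nth R 0) (Nat.zero_le _) ?_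
      intro i _ hi hRi
      obtain ⟨j, hj, hnth⟩ := hsurj i hRi
      have := Nat.nth_le_nth_of_lt_card hfin (Nat.zero_le j) hj
      omega
    have hall0 : K = 0 → ∀ i, ¬ R i := by
      intro h0 i hRi
      obtain ⟨j, hj, _⟩ := hsurj i hRi
      omega
    have hgap : ∀ k, k + 1 < K → p (Nat.nth R (k + 1)) = p (Nat.nth R k + 1) := by
      intro k hk
      refine pconst _ _ (Nat.nth_lt_nth_of_lt_card hfin (Nat.lt_succ_self k) hk) ?_
      intro i hi hi' hRi
      obtain ⟨j, hj, hnth⟩ := hsurj i hRi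
      rcases le_or_gt j k with h | h
      · have := Nat.nth_le_nth_of_lt_card hfin h (Nat.lt_of_succ_lt hk)
        omega
      · have := Nat.nth_le_nth_of_lt_card hfin (show k + 1 ≤ j from h) hj
        omega
    have hlast : K ≠ 0 → p N₀ = p (Nat.nth R (K - 1) + 1) := by
      intro hK0
      refine pconst _ _ (by have := hnth_lt (K - 1) (by omega); omega) ?_
      intro i hi hi' hRi
      obtain ⟨j, hj, hnth⟩ := hsurj i hRi
      have := Nat.nth_le_nth_of_lt_card hfin (show j ≤ K - 1 by omega) (Nat.sub_lt (Nat.pos_of_ne_zero hK0) Nat.one_pos)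
      omega
    set ρ : ℕ → V := fun m => if m < K then p (Nat.nth R m) else ξ (m - K) with hρdef
    have hpath : InfPath E (p 0) (wcat ul z) := by
      refine ⟨ρ, ?_, ?_⟩
      · simp only [hρdef]
        rcases Nat.eq_zero_or_pos K with h0 | h0
        · rw [if_neg (by omega), Nat.zero_sub, hξ0]
          exact pconst 0 N₀ (Nat.zero_le _) fun i _ _ hRi => hall0 h0 i hRi
        · rw [if_pos h0]
          exact hstart0 (by omega)
      · intro m
        by_cases hm1 : m + 1 < K
        · have hm : m < K := by omega
          simp only [hρdef, if_pos hm, if_pos hm1]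
          rw [hwlt z m hm, hgap m hm1]
          exact hR _ (Nat.nth_mem_of_lt_card hfin hm)
        · by_cases hm : m < K
          · have hmK : m + 1 = K := by omega
            simp only [hρdef, if_pos hm, if_neg hm1]
            have h1 : m + 1 - K = 0 := by omega
            rw [h1, hξ0, hwlt z m hm, hlast (by omega), show K - 1 = m by omega]
            exact hR _ (Nat.nth_mem_of_lt_card hfin hm)
          · have hmK : K ≤ m := by omega
            simp only [hρdef, if_neg hm, if_neg (show ¬ m + 1 < K by omega)]
            rw [hwge z m hmK, show m + 1 - K = (m - K) + 1 by omega]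
            exact hξs (m - K)
    calc val w = val (wcat ul (fun _ => e)) := hne _ _ hins
      _ = ⨅ z', val (wcat ul z') := hev ul
      _ ≤ val (wcat ul z) := iInf_le _ z
      _ ≤ vval val E (p 0) := val_le_vval hpath

end Stmt1Aux

section Stmt1Game

variable {C X : Type} [CompleteLinearOrder X] {val : (ℕ → C) → X} {e : C} {V : Type u}

/-- Master game vertex set. -/
abbrev MV (V : Type u) : Type u := V ⊕ {A : Set V // A.Nonempty}

/-- Master game edges. -/
def ME (E : V → C → V → Prop) (e : C) : MV V → C → MV V → Prop
  | Sum.inl v, c, Sum.inl v' => E v c v'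
  | Sum.inl v, c, Sum.inr A => c = e ∧ v ∈ A.1
  | Sum.inr A, c, Sum.inl a => c = e ∧ a ∈ A.1
  | Sum.inr _, _, Sum.inr _ => False

def VEveM (V : Type u) : Set (MV V) := {x | ∃ A, x = Sum.inr A}

theorem inl_not_mem_VEveM (v : V) : Sum.inl v ∉ VEveM V := by
  rintro ⟨A, h⟩; exact absurd h Sum.inl_ne_inr

theorem ME_noSinks {E : V → C → V → Prop} (hE : NoSinks E) (e : C) : NoSinks (ME E e) := by
  rintro (v | A)
  · obtain ⟨c, b, h⟩ := hE v
    exact ⟨c, Sum.inl b, h⟩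
  · exact ⟨e, Sum.inl A.2.choose, rfl, A.2.choose_spec⟩

def prevV (v : V) : List (C × MV V) → MV V
  | [] => Sum.inl v
  | _ :: r => lastV (Sum.inl v) r

def EveOK (v : V) : List (C × MV V) → Prop
  | [] => True
  | (_, x) :: rest => EveOK v rest ∧ ∀ A, lastV (Sum.inl v) rest = Sum.inr A → x = prevV v rest

def SIdH (E : V → C → V → Prop) (e : C) (v : V) : Set (List (C × MV V)) :=
  {π | ValidPath (ME E e) (Sum.inl v) π ∧ EveOK v π}

/-- The identity strategy for Eve in the master game. -/
noncomputable def SId (E : V → C → V → Prop) (e : C) (hE : NoSinks E) (v : V) :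
    Strategy (ME E e) (VEveM V) (Sum.inl v) where
  H := SIdH E e v
  F := fun π c π' => π ∈ SIdH E e v ∧ π' ∈ SIdH E e v ∧ ∃ x, π' = (c, x) :: π
  valid := fun _ h => h.1
  nil_mem := ⟨trivial, trivial⟩
  F_sub := fun _ _ _ h => ⟨h.1, h.2.1, h.2.2⟩
  no_sink := by
    intro π hπ
    rcases hlast : lastV (Sum.inl v) π with u | A
    · obtain ⟨c, b, hcb⟩ := hE u
      refine ⟨c, (c, Sum.inl b) :: π, hπ, ⟨⟨hπ.1, ?_⟩, ?_⟩, ⟨Sum.inl b, rfl⟩⟩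
      · rw [hlast]; exact hcb
      · exact ⟨hπ.2, fun A hA => absurd (hlast ▸ hA) Sum.inl_ne_inr⟩
    · match π, hlast with
      | (c₀, x₀) :: rest, hlast =>
        have hx₀ : x₀ = Sum.inr A := hlast
        obtain ⟨hvrest, hedge⟩ := hπ.1
        rw [hx₀] at hedge
        rcases hrest : lastV (Sum.inl v) rest with u₀ | B
        · rw [hrest] at hedge
          have hu₀ : u₀ ∈ A.1 := hedge.2
          refine ⟨e, (e, Sum.inl u₀) :: ((c₀, x₀) :: rest), hπ,
            ⟨⟨hπ.1, ?_⟩, hπ.2, fun A' hA' => ?_⟩, ⟨Sum.inl u₀, rfl⟩⟩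
          · rw [hlast]
            exact ⟨rfl, hu₀⟩
          · show Sum.inl u₀ = prevV v ((c₀, x₀) :: rest)
            show Sum.inl u₀ = lastV (Sum.inl v) rest
            rw [hrest]
        · rw [hrest] at hedge
          exact absurd hedge (fun h => h)
  adam_closed := by
    intro π hπ hAdam c x hedge
    have hmem : ((c, x) :: π) ∈ SIdH E e v :=
      ⟨⟨hπ.1, hedge⟩, hπ.2, fun A hA => absurd ⟨A, hA⟩ hAdam⟩
    exact ⟨hmem, hπ, hmem, ⟨x, rfl⟩⟩

theorem SId_value_le {E : V → C → V → Prop} (hE : NoSinks E)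
    (hne : Neutral val e) (hev : EvGoodForEve val e) (v : V) :
    (SId (C := C) E e hE v).value val ≤ vval val E v := by
  apply sSup_le
  rintro b ⟨w, ⟨ρ, hρ0, hρF⟩, rfl⟩
  have hmem' : ∀ n, ρ (n + 1) ∈ SIdH E e v := fun n => (hρF n).2.1
  choose x hx using fun n => (hρF n).2.2
  set y : ℕ → MV V := fun n => lastV (Sum.inl v) (ρ n) with hydef
  have hy0 : y 0 = Sum.inl v := by rw [hydef]; simp only [hρ0]; rfl
  have hy1 : ∀ n, y (n + 1) = x n := fun n => by
    simp only [hydef, hx n]; rfl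
  have hedge : ∀ n, ME E e (y n) (w n) (y (n + 1)) := by
    intro n
    have h1 := (hmem' n).1
    rw [hx n] at h1
    have := h1.2
    rw [hy1 n]
    exact this
  have hid : ∀ n A, y (n + 1) = Sum.inr A → y (n + 2) = y n := by
    intro n A hA
    have h2 := (hmem' (n + 1)).2
    rw [hx (n + 1)] at h2
    have h3 : x (n + 1) = prevV v (ρ (n + 1)) := h2.2 A (hA ▸ rfl)
    rw [hx n] at h3
    have h4 : prevV v ((w n, x n) :: ρ n) = lastV (Sum.inl v) (ρ n) := rfl
    rw [hy1 (n + 1), h3, h4]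
  set p : ℕ → V := fun n =>
    match y n with
    | Sum.inl u => u
    | Sum.inr _ =>
      match y (n + 1) with
      | Sum.inl u => u
      | Sum.inr _ => v
    with hpdef
  have hpl : ∀ n u, y n = Sum.inl u → p n = u := by
    intro n u h
    simp only [hpdef, h]
  have hpr : ∀ n A u, y n = Sum.inr A → y (n + 1) = Sum.inl u → p n = u := by
    intro n A u h h'
    simp only [hpdef, h, h']
  have hcore : ∀ n, E (p n) (w n) (p (n + 1)) ∨ (w n = e ∧ p (n + 1) = p n) := by
    intro n
    have he := hedge n
    rcases hyn : y n with u | A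
    · rcases hyn1 : y (n + 1) with u' | A'
      · left
        rw [hyn, hyn1] at he
        rw [hpl n u hyn, hpl (n + 1) u' hyn1]
        exact he
      · right
        rw [hyn, hyn1] at he
        refine ⟨he.1, ?_⟩
        have h2 : y (n + 2) = Sum.inl u := by rw [hid n A' hyn1, hyn]
        rw [hpl n u hyn, hpr (n + 1) A' u hyn1 h2]
    · rcases hyn1 : y (n + 1) with u' | A'
      · right
        rw [hyn, hyn1] at he
        refine ⟨he.1, ?_⟩
        rw [hpr n A u' hyn hyn1, hpl (n + 1) u' hyn1]
      · rw [hyn, hyn1] at he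
        exact absurd he (fun h => h)
  have := core hE hne hev p w hcore
  rwa [hpl 0 v hy0] at this

end Stmt1Game

section Stmt1Lift

variable {C X : Type} [CompleteLinearOrder X] {val : (ℕ → C) → X} {e : C} {V : Type u}

def sigmaFn (SC : ℕ → Prop) [DecidablePred SC] : ℕ → ℕ
  | 0 => 0
  | n + 1 => sigmaFn SC n + if SC n then 2 else 1

def idxFn (SC : ℕ → Prop) [DecidablePred SC] : ℕ → ℕ × Bool
  | 0 => (0, false)
  | i + 1 =>
    match idxFn SC i with
    | (n, false) => if SC n then (n, true) else (n + 1, false)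
    | (n, true) => (n + 1, false)

theorem sigmaFn_strictMono (SC : ℕ → Prop) [DecidablePred SC] : StrictMono (sigmaFn SC) :=
  strictMono_nat_of_lt_succ fun n => by
    show sigmaFn SC n < sigmaFn SC n + if SC n then 2 else 1
    split <;> omega

theorem idxFn_succ (SC : ℕ → Prop) [DecidablePred SC] (i : ℕ) :
    idxFn SC (i + 1) =
      match idxFn SC i with
      | (n, false) => if SC n then (n, true) else (n + 1, false)
      | (n, true) => (n + 1, false) := rfl

theorem idxFn_sigma (SC : ℕ → Prop) [DecidablePred SC] :
    ∀ n, idxFn SC (sigmaFn SC n) = (n, false) := by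
  intro n
  induction n with
  | zero => rfl
  | succ n ih =>
    by_cases h : SC n
    · have h2 : sigmaFn SC (n + 1) = sigmaFn SC n + 1 + 1 := by
        show sigmaFn SC n + (if SC n then 2 else 1) = _
        rw [if_pos h]
      rw [h2, idxFn_succ, idxFn_succ, ih]
      simp [h]
    · have h2 : sigmaFn SC (n + 1) = sigmaFn SC n + 1 := by
        show sigmaFn SC n + (if SC n then 2 else 1) = _
        rw [if_neg h]
      rw [h2, idxFn_succ, ih]
      simp [h]

theorem idxFn_spec (SC : ℕ → Prop) [DecidablePred SC] :
    ∀ i, (∃ n, i = sigmaFn SC n ∧ idxFn SC i = (n, false)) ∨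
      (∃ n, idxFn SC i = (n, true) ∧ SC n ∧ i = sigmaFn SC n + 1) := by
  intro i
  induction i with
  | zero => exact Or.inl ⟨0, rfl, rfl⟩
  | succ i ih =>
    rcases ih with ⟨n, hi, hidx⟩ | ⟨n, hidx, hSC, hi⟩
    · by_cases h : SC n
      · right
        refine ⟨n, ?_, h, by rw [hi]⟩
        rw [idxFn_succ, hidx]
        simp [h]
      · left
        refine ⟨n + 1, ?_, ?_⟩
        · rw [hi]
          show _ = sigmaFn SC n + (if SC n then 2 else 1)
          rw [if_neg h]
        · rw [idxFn_succ, hidx]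
          simp [h]
    · left
      refine ⟨n + 1, ?_, ?_⟩
      · rw [hi]
        show _ = sigmaFn SC n + (if SC n then 2 else 1)
        rw [if_pos hSC]
      · rw [idxFn_succ, hidx]

/-- Construction of the `ε`-saturated graph `U'` with the same values as `E`. -/
theorem exists_Uprime {E : V → C → V → Prop} (hpos : Positional.{u} val)
    (hne : Neutral val e) (hev : EvGoodForEve val e) (hE : NoSinks E) :
    ∃ U' : V → C → V → Prop, (∀ ⦃a : V⦄ ⦃c : C⦄ ⦃b : V⦄, E a c b → U' a c b) ∧
      SuffEps U' e ∧ (∀ v, vval val U' v = vval val E v) := by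
  classical
  obtain ⟨P, hP⟩ := hpos (MV V) (ME E e) (ME_noSinks hE e) (VEveM V)
  set U' : V → C → V → Prop := fun a c b => E a c b ∨
    (c = e ∧ ∃ A : {A : Set V // A.Nonempty}, a ∈ A.1 ∧ P.F (Sum.inr A) e (Sum.inl b))
    with hU'def
  have hsub : ∀ ⦃a : V⦄ ⦃c : C⦄ ⦃b : V⦄, E a c b → U' a c b := fun a c b h => Or.inl h
  refine ⟨U', hsub, ?_, ?_⟩
  · -- SuffEps
    intro A hA
    obtain ⟨c, b, hcb⟩ := P.no_sink (Sum.inr ⟨A, hA⟩)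
    have hEM := P.sub hcb
    match b, hEM, hcb with
    | Sum.inl a, hEM, hcb =>
      refine ⟨a, hEM.2, fun b hb => Or.inr ⟨rfl, ⟨A, hA⟩, hb, ?_⟩⟩
      rw [hEM.1] at hcb
      exact hcb
  · -- values
    intro v
    refine le_antisymm (vval_le ?_) (vval_mono_s1 hsub v)
    intro w hw
    obtain ⟨p, hp0, hpU⟩ := hw
    set SC : ℕ → Prop := fun n => ¬ E (p n) (w n) (p (n + 1)) with hSCdef
    have hsc : ∀ n, SC n →
        w n = e ∧ ∃ A : {A : Set V // A.Nonempty},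
          p n ∈ A.1 ∧ P.F (Sum.inr A) e (Sum.inl (p (n + 1))) :=
      fun n h => (hpU n).resolve_left h
    set AF : ℕ → {A : Set V // A.Nonempty} := fun n =>
      if h : SC n then (hsc n h).2.choose else ⟨{p n}, Set.singleton_nonempty _⟩ with hAFdef
    have hAF : ∀ n, SC n →
        p n ∈ (AF n).1 ∧ P.F (Sum.inr (AF n)) e (Sum.inl (p (n + 1))) := by
      intro n h
      simp only [hAFdef, dif_pos h]
      exact (hsc n h).2.choose_spec
    set w' : ℕ → C := fun i =>
      match idxFn SC i with
      | (n, false) => w n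
      | (_, true) => e
      with hw'def
    set ρ' : ℕ → MV V := fun i =>
      match idxFn SC i with
      | (n, false) => Sum.inl (p n)
      | (n, true) => Sum.inr (AF n)
      with hρ'def
    have hρ'0 : ρ' 0 = Sum.inl v := by
      simp only [hρ'def]
      show Sum.inl (p 0) = Sum.inl v
      rw [hp0]
    have hedges : ∀ i, P.F (ρ' i) (w' i) (ρ' (i + 1)) := by
      intro i
      rcases hsp : idxFn SC i with ⟨n, bb⟩
      cases bb
      · by_cases h : SC n
        · have h1 : idxFn SC (i + 1) = (n, true) := by
            rw [idxFn_succ, hsp]; exact if_pos h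
          have hval : w' i = w n := by simp only [hw'def, hsp]
          have hρi : ρ' i = Sum.inl (p n) := by simp only [hρ'def, hsp]
          have hρi1 : ρ' (i + 1) = Sum.inr (AF n) := by simp only [hρ'def, h1]
          rw [hval, hρi, hρi1, (hsc n h).1]
          exact P.adam_all _ (inl_not_mem_VEveM _) _ _ ⟨rfl, (hAF n h).1⟩
        · have h1 : idxFn SC (i + 1) = (n + 1, false) := by
            rw [idxFn_succ, hsp]; exact if_neg h
          have hval : w' i = w n := by simp only [hw'def, hsp]
          have hρi : ρ' i = Sum.inl (p n) := by simp only [hρ'def, hsp]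
          have hρi1 : ρ' (i + 1) = Sum.inl (p (n + 1)) := by simp only [hρ'def, h1]
          rw [hval, hρi, hρi1]
          exact P.adam_all _ (inl_not_mem_VEveM _) _ _ (not_not.1 h)
      · have hSCn : SC n := by
          rcases idxFn_spec SC i with ⟨m, _, hidx⟩ | ⟨m, hidx, hm, _⟩
          · rw [hsp] at hidx; exact absurd hidx (by simp)
          · rw [hsp] at hidx
            have hmn : n = m := congrArg Prod.fst hidx
            rwa [← hmn] at hm
        have h1 : idxFn SC (i + 1) = (n + 1, false) := by
          rw [idxFn_succ, hsp]
        have hval : w' i = e := by simp only [hw'def, hsp]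
        have hρi : ρ' i = Sum.inr (AF n) := by simp only [hρ'def, hsp]
        have hρi1 : ρ' (i + 1) = Sum.inl (p (n + 1)) := by simp only [hρ'def, h1]
        rw [hval, hρi, hρi1]
        exact (hAF n hSCn).2
    have hins : IsEpsInsertion e w w' := by
      refine ⟨sigmaFn SC, sigmaFn_strictMono SC, ?_, ?_⟩
      · intro k
        simp only [hw'def, idxFn_sigma SC k]
      · intro i hi
        rcases idxFn_spec SC i with ⟨n, hi', _⟩ | ⟨n, hidx, _, _⟩
        · exact absurd ⟨n, hi'.symm⟩ hi
        · simp only [hw'def, hidx]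
    have h1 : val w = val w' := (hne w w' hins).symm
    have h2 : val w' ≤ vval val P.F (Sum.inl v) := val_le_vval ⟨ρ', hρ'0, hedges⟩
    have h3 : vval val P.F (Sum.inl v) = gameValue val (ME E e) (VEveM V) (Sum.inl v) :=
      hP (Sum.inl v)
    have h4 : gameValue val (ME E e) (VEveM V) (Sum.inl v) ≤ (SId (C := C) E e hE v).value val :=
      iInf_le _ _
    have h5 := SId_value_le (val := val) hE hne hev v
    rw [h1]
    exact h2.trans (h3.le.trans (h4.trans h5))

end Stmt1Lift

section Stmt1Enum

variable {C X : Type} [CompleteLinearOrder X] {val : (ℕ → C) → X} {e : C}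

theorem exists_lub_of_wf {L : Type v} [LinearOrder L] [OrderTop L]
    (wf : WellFounded ((· < ·) : L → L → Prop)) (A : Set L) : ∃ m, IsLUB A m := by
  obtain ⟨m, hm, hmin⟩ := wf.has_min (upperBounds A) ⟨⊤, fun x _ => le_top⟩
  exact ⟨m, hm, fun u hu => not_lt.1 fun hlt => hmin u hu hlt⟩

open Classical in
noncomputable def enumG {V : Type u} (pick : (A : Set V) → A.Nonempty → V) (junk : V) :
    Ordinal.{u} → V :=
  Ordinal.lt_wf.fix fun o rec =>
    if h : {v : V | ∀ o' (h' : o' < o), rec o' h' ≠ v}.Nonempty then pick _ h else junk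

open Classical in
theorem enumG_eq {V : Type u} (pick : (A : Set V) → A.Nonempty → V) (junk : V)
    (o : Ordinal.{u}) :
    enumG pick junk o =
      if h : {v : V | ∀ o' < o, enumG pick junk o' ≠ v}.Nonempty then pick _ h else junk := by
  conv_lhs => rw [enumG, WellFounded.fix_eq]
  rfl

theorem exists_rank {V : Type u} [Nonempty V] {U' : V → C → V → Prop}
    (hse : SuffEps U' e) :
    ∃ rank : V → Ordinal.{u}, Function.Injective rank ∧
      ∀ a b : V, rank a ≤ rank b → U' b e a := by
  classical
  choose pick hmem hall using hse
  set g : Ordinal.{u} → V := enumG pick (Classical.arbitrary V) with hg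
  set rest : Ordinal.{u} → Set V := fun o => {v | ∀ o' < o, g o' ≠ v} with hrest
  have hgmem : ∀ o, (rest o).Nonempty → g o ∈ rest o ∧ ∀ b ∈ rest o, U' b e (g o) := by
    intro o h
    have hgo : g o = pick (rest o) h := by
      rw [hg, enumG_eq]
      exact dif_pos h
    rw [hgo]
    exact ⟨hmem _ h, hall _ h⟩
  have hempty : ∃ o, ¬(rest o).Nonempty := by
    by_contra hc
    push_neg at hc
    have hinj : Function.Injective g := by
      intro o₁ o₂ h12
      by_contra hne12
      rcases lt_or_gt_of_ne hne12 with h | h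
      · exact (hgmem o₂ (hc o₂)).1 o₁ h h12
      · exact (hgmem o₁ (hc o₁)).1 o₂ h h12.symm
    exact not_small_ordinal.{u, u} (small_of_injective hinj)
  set θ := sInf {o | ¬(rest o).Nonempty} with hθ
  have hθmem : ¬(rest θ).Nonempty := csInf_mem hempty
  have hltθ : ∀ o, o < θ → (rest o).Nonempty := by
    intro o ho
    by_contra h
    exact notMem_of_lt_csInf ho (OrderBot.bddBelow _) h
  have hsurj : ∀ v : V, ∃ o, o < θ ∧ g o = v := by
    intro v
    have hv : v ∉ rest θ := fun hv => hθmem ⟨v, hv⟩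
    rw [hrest] at hv
    simp only [Set.mem_setOf_eq, not_forall] at hv
    obtain ⟨o, ho, hgo⟩ := hv
    exact ⟨o, ho, not_not.1 hgo⟩
  set rank : V → Ordinal.{u} := fun v => sInf {o | g o = v} with hrank
  have hrmem : ∀ v, g (rank v) = v := by
    intro v
    obtain ⟨o, _, hgo⟩ := hsurj v
    exact csInf_mem (show {o | g o = v}.Nonempty from ⟨o, hgo⟩)
  have hrlt : ∀ v, rank v < θ := by
    intro v
    obtain ⟨o, ho, hgo⟩ := hsurj v
    exact lt_of_le_of_lt (csInf_le (OrderBot.bddBelow _)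
      (show o ∈ {o | g o = v} from hgo)) ho
  have hinj : Function.Injective rank := fun a b h => by
    rw [← hrmem a, ← hrmem b, h]
  refine ⟨rank, hinj, ?_⟩
  intro a b hab
  have hbmem : b ∈ rest (rank a) := by
    intro o' ho' hgo'
    have h1 : rank b ≤ o' := csInf_le (OrderBot.bddBelow _)
      (show o' ∈ {o | g o = b} from hgo')
    exact absurd hab (not_le.2 (lt_of_le_of_lt h1 ho'))
  have hfin := (hgmem (rank a) (hltθ _ (hrlt a))).2 b hbmem
  rwa [hrmem a] at hfin

end Stmt1Enum


/-- Theorem 5.1, "Positionality implies structure".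
Let `val` be a positional valuation admitting a strongly neutral color, and
let `G` be a `C`-graph.  Then there exists a completely well-monotonic
`C`-graph `G'` with a `val`-preserving morphism from `G` to `G'`. -/
theorem stmt1 {C X : Type} [CompleteLinearOrder X] (val : (ℕ → C) → X) (e : C)
    (hpos : Positional.{u} val) (hsn : StronglyNeutral val e)
    {V : Type u} (E : V → C → V → Prop) (hE : NoSinks E) :
    ∃ (L : Type u) (li : LinearOrder L) (M : L → C → L → Prop) (φ : V → L),
      @CWM C L li M ∧ ValPreserving val E M φ := by
  classical
  obtain ⟨hne, hev⟩ := hsn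
  rcases isEmpty_or_nonempty V with hVe | hVn
  · letI liV : LinearOrder V := LinearOrder.lift' (fun v : V => (hVe.elim v : ℕ))
      (fun a => (hVe.elim a))
    haveI : WellFoundedLT V := ⟨⟨fun a => (hVe.elim a)⟩⟩
    refine ⟨WithTop V, inferInstance, fun _ _ _ => True, fun v => (v : WithTop V),
      ⟨⟨?_, ?_⟩, ?_, ?_, ?_, ?_⟩, ?_, ?_⟩
    · intro a b c d _ _; trivial
    · intro a c b d _ _; trivial
    · intro a; exact ⟨e, a, trivial⟩
    · exact wellFounded_lt
    · exact exists_lub_of_wf wellFounded_lt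
    · intro c l; exact ⟨⊤, trivial⟩
    · intro a; exact (hVe.elim a)
    · intro a; exact (hVe.elim a)
  · obtain ⟨U', hsub, hse, hval⟩ := exists_Uprime (E := E) hpos hne hev hE
    obtain ⟨rank, hrinj, hkey⟩ := exists_rank (e := e) hse
    letI liV : LinearOrder V := LinearOrder.lift' rank hrinj
    have hle : ∀ a b : V, a ≤ b ↔ rank a ≤ rank b := fun a b => Iff.rfl
    have hltiff : ∀ a b : V, a < b ↔ rank a < rank b := by
      intro a b
      rw [lt_iff_le_not_ge, lt_iff_le_not_ge, hle, hle]
    haveI : WellFoundedLT V :=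
      ⟨Subrelation.wf (fun {a b} h => (hltiff a b).1 h) (InvImage.wf rank Ordinal.lt_wf)⟩
    have hec : ∀ a b : V, a ≤ b → U' b e a := fun a b h => hkey a b ((hle a b).1 h)
    have hself : ∀ a : V, U' a e a := fun a => hec a a le_rfl
    set M₀ : V → C → V → Prop := fun a c b => ∃ a' b' : V, a' ≤ a ∧ b ≤ b' ∧ U' a' c b'
      with hM₀
    have hM₀sub : ∀ ⦃a : V⦄ ⦃c : C⦄ ⦃b : V⦄, U' a c b → M₀ a c b :=
      fun a c b h => ⟨a, b, le_rfl, le_rfl, h⟩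
    have hvalM₀ : ∀ v : V, vval val M₀ v = vval val E v := by
      intro v
      refine le_antisymm (vval_le ?_) ?_
      · intro w hw
        obtain ⟨p, hp0, hpM⟩ := hw
        choose a' b' ha' hb' hU using hpM
        set q : ℕ → V := fun t =>
          if t = 0 then p 0 else if t % 2 = 1 then a' (t / 2) else b' ((t - 2) / 2) with hq
        set w'' : ℕ → C := fun t => if t % 2 = 0 then e else w (t / 2) with hw''
        have hins : IsEpsInsertion e w w'' := by
          refine ⟨fun k => 2 * k + 1,
            fun i j h => show 2 * i + 1 < 2 * j + 1 by omega, ?_, ?_⟩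
          · intro k
            simp only [hw'']
            rw [if_neg (by omega)]
            congr 1
            omega
          · intro i hi
            have h2 : i % 2 = 0 := by
              by_contra h2
              exact hi ⟨i / 2, show 2 * (i / 2) + 1 = i by omega⟩
            simp only [hw'', if_pos h2]
        have hpathU : InfPath U' v w'' := by
          refine ⟨q, by simp only [hq, if_pos rfl]; exact hp0, ?_⟩
          intro t
          rcases Nat.eq_zero_or_pos t with rfl | ht
          · have h1 : q 0 = p 0 := by simp only [hq, if_pos rfl]
            have h2 : q 1 = a' 0 := by
              simp only [hq]
              norm_num
            have h3 : w'' 0 = e := by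
              simp only [hw'']
              norm_num
            rw [h1, h2, h3]
            exact hec _ _ (ha' 0)
          · rcases Nat.even_or_odd t with ⟨n, hn⟩ | ⟨n, hn⟩
            · have h1 : q t = b' (n - 1) := by
                simp only [hq]
                rw [if_neg (show ¬t = 0 by omega), if_neg (show ¬t % 2 = 1 by omega)]
                congr 1
                omega
              have h2 : q (t + 1) = a' n := by
                simp only [hq]
                rw [if_neg (show ¬t + 1 = 0 by omega), if_pos (show (t + 1) % 2 = 1 by omega)]
                congr 1
                omega
              have h3 : w'' t = e := by
                simp only [hw'']
                rw [if_pos (show t % 2 = 0 by omega)]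
              rw [h1, h2, h3]
              refine hec _ _ (le_trans (ha' n) ?_)
              have hn1 : n - 1 + 1 = n := by omega
              have := hb' (n - 1)
              rwa [hn1] at this
            · have h1 : q t = a' n := by
                simp only [hq]
                rw [if_neg (show ¬t = 0 by omega), if_pos (show t % 2 = 1 by omega)]
                congr 1
                omega
              have h2 : q (t + 1) = b' n := by
                simp only [hq]
                rw [if_neg (show ¬t + 1 = 0 by omega), if_neg (show ¬(t + 1) % 2 = 1 by omega)]
                congr 1
                omega
              have h3 : w'' t = w n := by
                simp only [hw'']
                rw [if_neg (show ¬t % 2 = 0 by omega)]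
                congr 1
                omega
              rw [h1, h2, h3]
              exact hU n
        calc val w = val w'' := (hne w w'' hins).symm
          _ ≤ vval val U' v := val_le_vval hpathU
          _ = vval val E v := hval v
      · exact vval_mono_s1 (fun a c b h => hM₀sub (hsub h)) v
    set M : WithTop V → C → WithTop V → Prop := completionE M₀ with hM
    have hpaths : ∀ (a : V) (w : ℕ → C), InfPath M (a : WithTop V) w ↔ InfPath M₀ a w := by
      intro a w
      constructor
      · rintro ⟨ρ, h0, hs⟩
        have hcoe : ∀ n, ∃ b : V, ρ n = (b : WithTop V) := by
          intro n
          induction n with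
          | zero => exact ⟨a, h0⟩
          | succ n ih =>
            obtain ⟨b, hb⟩ := ih
            rcases hs n with htop | ⟨x, y, _, hy, _⟩
            · rw [hb] at htop
              exact absurd htop (WithTop.coe_ne_top)
            · exact ⟨y, hy⟩
        choose qq hqq using hcoe
        refine ⟨qq, ?_, ?_⟩
        · have h1 := hqq 0
          rw [h0] at h1
          exact (WithTop.coe_inj.1 h1.symm)
        · intro n
          rcases hs n with htop | ⟨x, y, hx, hy, hxy⟩
          · rw [hqq n] at htop
            exact absurd htop (WithTop.coe_ne_top)
          · have hxn : x = qq n := by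
              rw [hqq n] at hx
              exact WithTop.coe_inj.1 hx.symm
            have hyn : y = qq (n + 1) := by
              rw [hqq (n + 1)] at hy
              exact WithTop.coe_inj.1 hy.symm
            rw [← hxn, ← hyn]
            exact hxy
      · rintro ⟨qq, h0, hs⟩
        exact ⟨fun n => (qq n : WithTop V), by simp only [h0],
          fun n => Or.inr ⟨qq n, qq (n + 1), rfl, rfl, hs n⟩⟩
    have hvvalM : ∀ a : V, vval val M (a : WithTop V) = vval val M₀ a := by
      intro a
      exact le_antisymm (vval_le fun w hw => val_le_vval ((hpaths a w).1 hw))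
        (vval_le fun w hw => val_le_vval ((hpaths a w).2 hw))
    refine ⟨WithTop V, inferInstance, M, fun v => (v : WithTop V),
      ⟨⟨?_, ?_⟩, ?_, ?_, ?_, ?_⟩, ?_, ?_⟩
    · -- LeftComp
      intro x y c d hyx hMe
      rcases hMe with h | ⟨a, b, ha, hb, hab⟩
      · rw [h] at hyx
        exact Or.inl (top_le_iff.1 hyx)
      · rcases x with _ | x
        · exact Or.inl rfl
        · rw [ha] at hyx
          have hax : a ≤ x := WithTop.coe_le_coe.1 hyx
          obtain ⟨a', b', ha', hb', hU'⟩ := hab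
          exact Or.inr ⟨x, b, rfl, hb, ⟨a', b', le_trans ha' hax, hb', hU'⟩⟩
    · -- RightComp
      intro x c y d hMe hdy
      rcases hMe with h | ⟨a, b, ha, hb, hab⟩
      · exact Or.inl h
      · rw [hb] at hdy
        rcases d with _ | d
        · exact absurd (top_le_iff.1 hdy) WithTop.coe_ne_top
        · have hdb : d ≤ b := WithTop.coe_le_coe.1 hdy
          obtain ⟨a', b', ha', hb', hU'⟩ := hab
          exact Or.inr ⟨a, d, ha, rfl, ⟨a', b', ha', le_trans hdb hb', hU'⟩⟩
    · -- NoSinks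
      rintro (_ | a)
      · exact ⟨e, ⊤, Or.inl rfl⟩
      · exact ⟨e, (a : WithTop V), Or.inr ⟨a, a, rfl, rfl, hM₀sub (hself a)⟩⟩
    · exact wellFounded_lt
    · exact exists_lub_of_wf wellFounded_lt
    · intro c l
      exact ⟨⊤, Or.inl rfl⟩
    · -- morphism
      intro a c b h
      exact Or.inr ⟨a, b, rfl, rfl, hM₀sub (hsub h)⟩
    · -- values
      intro a
      rw [hvvalM a, hvalM₀ a]
end

section
/- Let L be a completely well-monotonic C-graph with min-predecessor maps ρ_c, let 𝒢 = (G, V_Eve, val) be a C-game with G = (V,E), let S = (H,F) be a strategy from a vertex v₀, and let ψ be a val-preserving morphism from S (viewed as a C-graph) to L. Define φ : V → L by φ(v) = inf { ψ(π) : π ∈ H and π ends in v }, where the empty path is deemed to end in v₀ (so φ(v) is the top element of L when no path of H ends in v). Then φ is a progress measure, and val_L(φ(v₀)) ≤ val(S). -/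
/-!
Common vocabulary: graphs as edge relations `E : V → C → V → Prop` (a `C`-graph
additionally has no sinks), infinite paths and their colorations, valuations,
values of vertices, morphisms, universality, monotonic graphs, games,
strategies, positional strategies and positionality, neutral colors.
-/

universe u v w

/-- The min-predecessor map `ρ_c` of a completely well-monotonic graph:
`ρ_c(l') = min { l | l →c l' }` (the infimum, which is attained by
well-foundedness and completeness). -/
noncomputable def minPred {C : Type} {L : Type v} [CompleteLinearOrder L]
    (M : L → C → L → Prop) (c : C) (l' : L) : L :=
  sInf {l | M l c l'}

open Classical in
/-- The update operator on maps `φ : V → L` associated to a game `(E, VEve)`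
and a completely well-monotonic graph `M`. -/
noncomputable def Upd {C : Type} {L : Type v} {V : Type w} [CompleteLinearOrder L]
    (M : L → C → L → Prop) (E : V → C → V → Prop) (VEve : Set V)
    (φ : V → L) (a : V) : L :=
  if a ∈ VEve then sInf {x | ∃ (c : C) (b : V), E a c b ∧ x = minPred M c (φ b)}
  else sSup {x | ∃ (c : C) (b : V), E a c b ∧ x = minPred M c (φ b)}

/-- A progress measure is a prefixpoint of the update operator. -/
def ProgressMeasure {C : Type} {L : Type v} {V : Type w} [CompleteLinearOrder L]
    (M : L → C → L → Prop) (E : V → C → V → Prop) (VEve : Set V)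
    (φ : V → L) : Prop :=
  ∀ a : V, Upd M E VEve φ a ≤ φ a
/-- A strategy `S = (H, F)` viewed as a `C`-graph over its set `H` of
histories. -/
def Strategy.rel {C : Type} {V : Type w} {E : V → C → V → Prop} {VEve : Set V}
    {v₀ : V} (S : Strategy E VEve v₀) :
    {π : List (C × V) // π ∈ S.H} → C → {π : List (C × V) // π ∈ S.H} → Prop :=
  fun p c q => S.F p.val c q.val

/-- Lemma 4.2, from strategies to progress measures.
Given a strategy `S` from `v₀` and a `val`-preserving morphism `ψ` from `S`
to a completely well-monotonic graph `L`, the map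
`φ(v) = inf { ψ(π) | π ∈ H ends in v }` is a progress measure with
`val_L(φ(v₀)) ≤ val(S)`. -/
theorem stmt4 {C X : Type} {L : Type v} {V : Type w} [CompleteLinearOrder X]
    [CompleteLinearOrder L] (val : (ℕ → C) → X)
    (M : L → C → L → Prop) (hmono : Monotonic M) (hns : NoSinks M)
    (hwf : WellFounded ((· < ·) : L → L → Prop)) (hpred : CompletePreds M)
    (E : V → C → V → Prop) (hE : NoSinks E) (VEve : Set V) (v₀ : V)
    (S : Strategy E VEve v₀)
    (ψ : {π : List (C × V) // π ∈ S.H} → L)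
    (hψ : ValPreserving val S.rel M ψ)
    (φ : V → L)
    (hφ : ∀ a : V, φ a = sInf (ψ '' {p | lastV v₀ p.val = a})) :
    ProgressMeasure M E VEve φ ∧ vval val M (φ v₀) ≤ S.value val := by
  obtain ⟨hmor, hval⟩ := hψ
  -- minPred is attained
  have hmem : ∀ (c : C) (l' : L), M (minPred M c l') c l' := by
    intro c l'
    obtain ⟨p, hp⟩ := hpred c l'
    have hne : {l | M l c l'}.Nonempty := ⟨p, hp⟩
    have hminmem := hwf.min_mem _ hne
    have heq : minPred M c l' = hwf.min _ hne :=
      le_antisymm (sInf_le hminmem)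
        (le_sInf fun b hb => not_lt.1 (hwf.not_lt_min _ hb))
    rw [heq]; exact hminmem
  -- minPred is monotone
  have hmono' : ∀ (c : C) {l₁ l₂ : L}, l₁ ≤ l₂ → minPred M c l₁ ≤ minPred M c l₂ := by
    intro c l₁ l₂ h
    exact sInf_le_sInf (fun l hl => hmono.2 hl h)
  -- key step: an edge in the strategy gives minPred M c (φ x) ≤ ψ p
  have hkey : ∀ (p : List (C × V)) (hp : p ∈ S.H) (c : C) (x : V)
      (hp' : ((c, x) :: p) ∈ S.H), S.F p c ((c, x) :: p) →
      minPred M c (φ x) ≤ ψ ⟨p, hp⟩ := by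
    intro p hp c x hp' hF
    have hrel : S.rel ⟨p, hp⟩ c ⟨(c, x) :: p, hp'⟩ := hF
    have hM : M (ψ ⟨p, hp⟩) c (ψ ⟨(c, x) :: p, hp'⟩) := hmor hrel
    have hφx : φ x ≤ ψ ⟨(c, x) :: p, hp'⟩ := by
      rw [hφ]; exact sInf_le ⟨⟨(c, x) :: p, hp'⟩, rfl, rfl⟩
    calc minPred M c (φ x) ≤ minPred M c (ψ ⟨(c, x) :: p, hp'⟩) := hmono' c hφx
      _ ≤ ψ ⟨p, hp⟩ := sInf_le hM
  constructor
  · -- progress measure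
    intro a
    unfold Upd
    split_ifs with ha
    · -- Eve vertex
      rw [hφ a]
      apply le_sInf
      rintro _ ⟨⟨p, hp⟩, hlast, rfl⟩
      obtain ⟨c, p', hF⟩ := S.no_sink p hp
      obtain ⟨_, hp', x, rfl⟩ := S.F_sub hF
      have hvalid := S.valid _ hp'
      have hEedge : E a c x := by
        have := hvalid.2
        rwa [hlast] at this
      exact le_trans (sInf_le ⟨c, x, hEedge, rfl⟩) (hkey p hp c x hp' hF)
    · -- Adam vertex
      apply sSup_le
      rintro _ ⟨c, b, hEab, rfl⟩
      rw [hφ a]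
      apply le_sInf
      rintro _ ⟨⟨p, hp⟩, hlast, rfl⟩
      have hnotEve : lastV v₀ p ∉ VEve := by rwa [hlast]
      have hEdge : E (lastV v₀ p) c b := by rwa [hlast]
      obtain ⟨hp', hF⟩ := S.adam_closed p hp hnotEve c b hEdge
      exact hkey p hp c b hp' hF
  · -- value inequality
    have h0 : φ v₀ ≤ ψ ⟨[], S.nil_mem⟩ := by
      rw [hφ]; exact sInf_le ⟨⟨[], S.nil_mem⟩, rfl, rfl⟩
    have step1 : vval val M (φ v₀) ≤ vval val M (ψ ⟨[], S.nil_mem⟩) := by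
      apply sSup_le_sSup
      apply Set.image_mono
      intro w hw
      obtain ⟨ρ, hρ0, hρ⟩ := hw
      refine ⟨fun i => if i = 0 then ψ ⟨[], S.nil_mem⟩ else ρ i, by simp, ?_⟩
      intro i
      cases i with
      | zero =>
        simp only [if_pos rfl, if_neg (Nat.succ_ne_zero 0)]
        exact hmono.1 (hρ0 ▸ h0) (hρ 0)
      | succ n =>
        simp only [if_neg (Nat.succ_ne_zero n), if_neg (Nat.succ_ne_zero (n+1))]
        exact hρ (n + 1)
    have step2 : vval val M (ψ ⟨[], S.nil_mem⟩) = vval val S.rel ⟨[], S.nil_mem⟩ :=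
      hval ⟨[], S.nil_mem⟩
    have step3 : vval val S.rel ⟨[], S.nil_mem⟩ ≤ S.value val := by
      apply sSup_le_sSup
      apply Set.image_mono
      intro w hw
      obtain ⟨ρ, hρ0, hρ⟩ := hw
      exact ⟨fun i => (ρ i).val, by simp [hρ0], fun i => hρ i⟩
    calc vval val M (φ v₀) ≤ vval val M (ψ ⟨[], S.nil_mem⟩) := step1
      _ = vval val S.rel ⟨[], S.nil_mem⟩ := step2
      _ ≤ S.value val := step3
end

section
/- Let L be a completely well-monotonic C-graph with min-predecessor maps ρ_c, let 𝒢 = (G, V_Eve, val) be a C-game with G = (V,E), and let φ : V → L be a progress measure. Let P_φ be the positional strategy that keeps, at each Eve vertex v, exactly those outgoing edges v →c v' of G attaining the minimum min over edges v →c v' of ρ_c(φ(v')), and keeps all outgoing edges of Adam vertices. Then for every finite path from v to v' in P_φ with coloration w ∈ C*, there is a finite path from φ(v) to φ(v') in L with coloration w. -/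
/-!
Common vocabulary: graphs as edge relations `E : V → C → V → Prop` (a `C`-graph
additionally has no sinks), infinite paths and their colorations, valuations,
values of vertices, morphisms, universality, monotonic graphs, games,
strategies, positional strategies and positionality, neutral colors.
-/

universe u v w

/-- `FinPathCol E a ws b` : there is a finite path from `a` to `b` in `E`
with coloration `ws`. -/
def FinPathCol {C : Type} {V : Type w} (E : V → C → V → Prop) :
    V → List C → V → Prop
  | a, [], b => a = b
  | a, c :: cs, b => ∃ x : V, E a c x ∧ FinPathCol E x cs b

/-- The positional strategy `P_φ` extracted from a progress measure `φ`:
at an Eve vertex exactly the outgoing edges attaining the minimum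
`min_{v →c v'} ρ_c(φ(v'))` are kept, while Adam vertices keep all their
outgoing edges. -/
def PphiRel {C : Type} {L : Type v} {V : Type w} [CompleteLinearOrder L]
    (M : L → C → L → Prop) (E : V → C → V → Prop) (VEve : Set V)
    (φ : V → L) : V → C → V → Prop := fun a c b =>
  E a c b ∧ (a ∈ VEve → minPred M c (φ b) = Upd M E VEve φ a)


lemma sInf_mem_of_wf {L : Type v} [CompleteLinearOrder L]
    (hwf : WellFounded ((· < ·) : L → L → Prop)) {S : Set L} (hne : S.Nonempty) :
    sInf S ∈ S := by
  obtain ⟨m, hm, hmin⟩ := hwf.has_min S hne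
  have hlb : ∀ x ∈ S, m ≤ x := fun x hx => le_of_not_gt (hmin x hx)
  have : sInf S = m := le_antisymm (sInf_le hm) (le_sInf hlb)
  rw [this]; exact hm

/-- Lemma 4.3, from progress measures to positional
strategies.  If `φ` is a progress measure then every finite path
`v →w v'` in `P_φ` gives a finite path `φ(v) →w φ(v')` in `L`. -/
theorem stmt5 {C X : Type} {L : Type v} {V : Type w} [CompleteLinearOrder X]
    [CompleteLinearOrder L] (val : (ℕ → C) → X)
    (M : L → C → L → Prop) (hmono : Monotonic M) (hns : NoSinks M)
    (hwf : WellFounded ((· < ·) : L → L → Prop)) (hpred : CompletePreds M)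
    (E : V → C → V → Prop) (hE : NoSinks E) (VEve : Set V)
    (φ : V → L) (hpm : ProgressMeasure M E VEve φ) :
    ∀ (a b : V) (ws : List C),
      FinPathCol (PphiRel M E VEve φ) a ws b → FinPathCol M (φ a) ws (φ b) := by
  have key : ∀ (a b : V) (c : C), PphiRel M E VEve φ a c b → M (φ a) c (φ b) := by
    intro a b c ⟨hab, heve⟩
    have hne : {l | M l c (φ b)}.Nonempty := hpred c (φ b)
    have hmem : M (minPred M c (φ b)) c (φ b) := sInf_mem_of_wf hwf hne
    have hle : minPred M c (φ b) ≤ φ a := by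
      by_cases ha : a ∈ VEve
      · rw [heve ha]; exact hpm a
      · refine le_trans ?_ (hpm a)
        unfold Upd
        rw [if_neg ha]
        exact le_sSup ⟨c, b, hab, rfl⟩
    exact hmono.1 hle hmem
  intro a b ws
  induction ws generalizing a with
  | nil => intro h; exact congrArg φ h
  | cons c cs ih =>
    rintro ⟨x, hx, hrest⟩
    exact ⟨φ x, key a x c hx, ih x hrest⟩
end

section
/- Let val be a C-valuation with a neutral color ε, and let G be a C-graph with sufficiently many ε-edges. Then there exists a completely well-monotonic C-graph G' and a val-preserving morphism from G to G'. -/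
/-!
Common vocabulary: graphs as edge relations `E : V → C → V → Prop` (a `C`-graph
additionally has no sinks), infinite paths and their colorations, valuations,
values of vertices, morphisms, universality, monotonic graphs, games,
strategies, positional strategies and positionality, neutral colors.
-/

universe u v w

set_option maxHeartbeats 1000000 in
/-- Lemma 5.3, second step.  If `val` has a neutral color
`e` and `G` has sufficiently many `e`-edges, then there is a completely
well-monotonic graph `G'` with a `val`-preserving morphism `G → G'`. -/
theorem stmt6 {C X : Type} {V : Type u} [CompleteLinearOrder X]
    (val : (ℕ → C) → X) (e : C) (hne : Neutral val e)
    (E : V → C → V → Prop) (hE : NoSinks E) (hse : SuffEps E e) :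
    ∃ (L : Type u) (li : LinearOrder L) (M : L → C → L → Prop) (φ : V → L),
      @CWM C L li M ∧ ValPreserving val E M φ := by
  classical
  -- The relation `¬ E b e a` is well-founded thanks to `hse`.
  have hwf : WellFounded (fun b a : V => ¬ E b e a) := by
    rw [WellFounded.wellFounded_iff_has_min]
    intro s hs
    obtain ⟨a, ha, h⟩ := hse s hs
    exact ⟨a, ha, fun b hb hb' => hb' (h b hb)⟩
  set ρ : V → Ordinal.{u} := fun v => (hwf.apply v).rank with hρdef
  have hρ : ∀ {v w : V}, ¬ E v e w → ρ v < ρ w := fun h => Acc.rank_lt_of_rel (hwf.apply _) h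
  set t : V → Ordinal.{u} := fun v => Ordinal.typein (@WellOrderingRel V) v with htdef
  have ht : Function.Injective t := Ordinal.typein_injective _
  set f : V → Ordinal.{u} ×ₗ Ordinal.{u} := fun v => toLex (ρ v, t v) with hfdef
  have hf : Function.Injective f := by
    intro a b hab
    exact ht (congrArg (fun p => (ofLex p).2) hab)
  letI li : LinearOrder V := LinearOrder.lift' f hf
  have hlt : ∀ {v w : V}, v < w ↔ f v < f w := Iff.rfl
  have hle : ∀ {v w : V}, v ≤ w ↔ f v ≤ f w := Iff.rfl
  -- the key property of the order: bigger vertices have `e`-edges to smaller ones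
  have hkey : ∀ v w : V, w ≤ v → E v e w := by
    intro v w hwv
    by_contra h
    have h2 : v < w := hlt.2 (by
      rw [hfdef, Prod.Lex.lt_iff]
      exact Or.inl (hρ h))
    exact absurd hwv (not_le.2 h2)
  have hwfV : WellFounded ((· < ·) : V → V → Prop) := by
    have h1 : WellFounded ((· < ·) : (Ordinal.{u} ×ₗ Ordinal.{u}) →
        (Ordinal.{u} ×ₗ Ordinal.{u}) → Prop) := wellFounded_lt
    exact Subrelation.wf (fun {a b} h => hlt.1 h) (InvImage.wf f h1)
  letI : WellFoundedLT V := ⟨hwfV⟩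
  -- the monotonic graph on `WithTop V`
  set ML : WithTop V → C → WithTop V → Prop := fun x c y =>
    x = ⊤ ∨ ∃ a b : V, x = (a : WithTop V) ∧ y = (b : WithTop V) ∧
      ∃ v w : V, v ≤ a ∧ b ≤ w ∧ E v c w with hMLdef
  have hML_coe : ∀ {a : V} {c : C} {y : WithTop V}, ML (a : WithTop V) c y →
      ∃ b : V, y = (b : WithTop V) ∧ ∃ v w : V, v ≤ a ∧ b ≤ w ∧ E v c w := by
    intro a c y h
    rcases h with h | ⟨a', b, ha, hy, v, w, h1, h2, h3⟩
    · exact absurd h (by simp)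
    · refine ⟨b, hy, v, w, ?_, h2, h3⟩
      rwa [show a' = a from by exact_mod_cast ha.symm] at h1
  refine ⟨WithTop V, inferInstance, ML, fun v => (v : WithTop V), ⟨⟨?_, ?_⟩, ?_, ?_, ?_, ?_⟩,
    ?_, ?_⟩
  · -- LeftComp
    intro a b c d hba hM
    induction a with
    | top => exact Or.inl rfl
    | coe a0 =>
      rcases hM with hM | ⟨b0, d0, hb, hd, v, w, h1, h2, h3⟩
      · subst hM; exact absurd hba (by simp)
      · subst hb
        refine Or.inr ⟨a0, d0, rfl, hd, v, w, le_trans h1 (by exact_mod_cast hba), h2, h3⟩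
  · -- RightComp
    intro a c b d hM hdb
    rcases hM with hM | ⟨a0, b0, ha, hb, v, w, h1, h2, h3⟩
    · exact Or.inl hM
    · subst hb
      induction d with
      | top => exact absurd hdb (by simp)
      | coe d0 =>
        exact Or.inr ⟨a0, d0, ha, rfl, v, w, h1, le_trans (by exact_mod_cast hdb) h2, h3⟩
  · -- NoSinks
    intro x
    induction x with
    | top => exact ⟨e, ⊤, Or.inl rfl⟩
    | coe v =>
      obtain ⟨c, w, hw⟩ := hE v
      exact ⟨c, (w : WithTop V), Or.inr ⟨v, w, rfl, rfl, v, w, le_rfl, le_rfl, hw⟩⟩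
  · -- well-founded
    exact wellFounded_lt
  · -- all LUBs exist
    intro A
    have hne' : (upperBounds A).Nonempty := ⟨⊤, fun x _ => le_top⟩
    obtain ⟨m, hm, hmin⟩ := (wellFounded_lt (α := WithTop V)).has_min _ hne'
    exact ⟨m, hm, fun x hx => not_lt.1 (hmin x hx)⟩
  · -- complete predecessors
    intro c l
    exact ⟨⊤, Or.inl rfl⟩
  · -- morphism
    intro a c b h
    exact Or.inr ⟨a, b, rfl, rfl, a, b, le_rfl, le_rfl, h⟩
  · -- value preservation
    intro a
    apply le_antisymm
    · -- every ML-path from `a` can be simulated in `E` with inserted `e`'s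
      apply sSup_le
      rintro x ⟨w, hw, rfl⟩
      obtain ⟨ρp, h0, hstep⟩ := hw
      have hnt : ∀ i, ρp i ≠ ⊤ := by
        intro i
        induction i with
        | zero => rw [h0]; simp
        | succ i ih =>
          obtain ⟨b, hb, _⟩ := hML_coe (y := ρp (i+1))
            (by rw [(WithTop.coe_untop _ ih)]; exact hstep i)
          rw [hb]; simp
      set ρ' : ℕ → V := fun i => (ρp i).untop (hnt i) with hρ'def
      have hρ'c : ∀ i, (ρ' i : WithTop V) = ρp i := fun i => WithTop.coe_untop _ _
      have h0' : ρ' 0 = a := by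
        apply WithTop.coe_injective
        rw [hρ'c 0, h0]
      have hstep' : ∀ i, ∃ v w' : V, v ≤ ρ' i ∧ ρ' (i+1) ≤ w' ∧ E v (w i) w' := by
        intro i
        obtain ⟨b, hb, v, w', h1, h2, h3⟩ := hML_coe (a := ρ' i) (c := w i) (y := ρp (i+1))
          (by rw [hρ'c i]; exact hstep i)
        refine ⟨v, w', h1, ?_, h3⟩
        have : (ρ' (i+1) : WithTop V) = (b : WithTop V) := by rw [hρ'c]; exact hb
        rw [show ρ' (i+1) = b from by exact_mod_cast this]
        exact h2
      choose vv ww hv hw' hEvw using hstep'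
      -- the simulated path in `E`
      set τ : ℕ → V := fun n => match n with
        | 0 => a
        | Nat.succ m => if m % 2 = 0 then vv (m/2) else ww (m/2) with hτdef
      set c' : ℕ → C := fun n => if n % 2 = 0 then e else w (n/2) with hc'def
      have hpath : InfPath E a c' := by
        refine ⟨τ, rfl, ?_⟩
        intro n
        match n with
        | 0 =>
          have hτ1 : τ 1 = vv 0 := by simp [hτdef]
          have hc0 : c' 0 = e := by simp [hc'def]
          rw [hτ1, hc0]
          exact hkey a (vv 0) (h0' ▸ hv 0)
        | Nat.succ m =>
          rcases Nat.even_or_odd m with ⟨k, hk⟩ | ⟨k, hk⟩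
          · -- m = 2k : step m+1 = 2k+1, an E-edge vv k → ww k with color w k
            have h1 : τ (m+1) = vv k := by
              simp only [hτdef]
              rw [if_pos (by omega)]
              congr 1; omega
            have h2 : τ (m+2) = ww k := by
              simp only [hτdef]
              rw [if_neg (by omega)]
              congr 1; omega
            have h3 : c' (m+1) = w k := by
              simp only [hc'def]
              rw [if_neg (by omega)]
              congr 1; omega
            rw [h1, h2, h3]
            exact hEvw k
          · -- m = 2k+1 : step m+1 = 2k+2, an e-edge ww k → vv (k+1)
            have h1 : τ (m+1) = ww k := by
              simp only [hτdef]
              rw [if_neg (by omega)]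
              congr 1; omega
            have h2 : τ (m+2) = vv (k+1) := by
              simp only [hτdef]
              rw [if_pos (by omega)]
              congr 1; omega
            have h3 : c' (m+1) = e := by
              simp only [hc'def]
              rw [if_pos (by omega)]
            rw [h1, h2, h3]
            exact hkey (ww k) (vv (k+1)) (le_trans (hv (k+1)) (hw' k))
      have hins : IsEpsInsertion e w c' := by
        refine ⟨fun k => 2*k+1, fun i j hij => by show 2*i+1 < 2*j+1; omega, ?_, ?_⟩
        · intro k
          show c' (2*k+1) = w k
          simp only [hc'def]
          rw [if_neg (by omega)]
          congr 1; omega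
        · intro i hi
          simp only [hc'def]
          rw [if_pos ?_]
          rcases Nat.even_or_odd i with ⟨k, hk⟩ | ⟨k, hk⟩
          · omega
          · exact absurd ⟨k, show 2*k+1 = i by omega⟩ hi
      have : val c' = val w := hne w c' hins
      rw [← this]
      exact le_sSup ⟨c', hpath, rfl⟩
    · -- E-paths are ML-paths
      apply sSup_le_sSup
      apply Set.image_mono
      rintro w ⟨ρ0, h0, hs⟩
      exact ⟨fun i => (ρ0 i : WithTop V), congrArg (fun v : V => (v : WithTop V)) h0, fun i =>
        Or.inr ⟨ρ0 i, ρ0 (i+1), rfl, rfl, ρ0 i, ρ0 (i+1), le_rfl, le_rfl, hs i⟩⟩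
end

section
/- Let val be a positional C-valuation with a strongly neutral color ε, let G = (V,E) be a C-graph, and let 𝒢' be the C-game defined from G as in the context. Let P' be an optimal positional strategy in 𝒢', and define the C-graph G'' = (V, E'') with E'' = E ∪ { v →ε v' : there exists A ∈ 𝒫⁺(V) with v, v' ∈ A and A →ε v' in P' }. Then the identity map on V is a val-preserving morphism from G to G'', and G'' has sufficiently many ε-edges. -/
/-!
Common vocabulary: graphs as edge relations `E : V → C → V → Prop` (a `C`-graph
additionally has no sinks), infinite paths and their colorations, valuations,
values of vertices, morphisms, universality, monotonic graphs, games,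
strategies, positional strategies and positionality, neutral colors.
-/

universe u v w

/-- The game `𝒢'` built from a graph `G = (V, E)` and a (strongly neutral)
color `e`: vertices are `V ⊕ 𝒫⁺(V)`, Eve controls the nonempty subsets,
edges are those of `E` together with `v →e A` and `A →e v` for `v ∈ A`. -/
def gameE {C : Type} {V : Type u} (E : V → C → V → Prop) (e : C) :
    V ⊕ {A : Set V // A.Nonempty} → C → V ⊕ {A : Set V // A.Nonempty} → Prop :=
  fun x c y =>
    match x, y with
    | Sum.inl a, Sum.inl b => E a c b
    | Sum.inl a, Sum.inr A => c = e ∧ a ∈ A.val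
    | Sum.inr A, Sum.inl b => c = e ∧ b ∈ A.val
    | Sum.inr _, Sum.inr _ => False
/-- The graph `G''` obtained from `G` by adding the `e`-edges `v →e v'`
whenever some nonempty `A` contains both `v, v'` and `A →e v'` is an edge of
the optimal positional strategy `P'`. -/
def augE {C : Type} {V : Type u} (E : V → C → V → Prop) (e : C)
    (P' : PosStrategy (gameE E e) (Set.range Sum.inr)) : V → C → V → Prop :=
  fun a c b => E a c b ∨
    (c = e ∧ ∃ A : {A : Set V // A.Nonempty}, a ∈ A.val ∧ b ∈ A.val ∧
      P'.F (Sum.inr A) e (Sum.inl b))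

/-! ### Auxiliary machinery for the proof of `stmt8` -/

section Aux

variable {C X : Type} {V : Type u} {T : Type w} [CompleteLinearOrder X]

/-- From a graph with no sinks, an infinite path from any vertex. -/
lemma exists_infPath_s8 (E : V → C → V → Prop) (hE : NoSinks E) (a : V) :
    ∃ (ρ : ℕ → V) (z : ℕ → C), ρ 0 = a ∧ ∀ n, E (ρ n) (z n) (ρ (n + 1)) := by
  classical
  choose c b hb using hE
  refine ⟨fun n => Nat.rec a (fun _ v => b v) n,
    fun n => c (Nat.rec a (fun _ v => b v) n), rfl, fun n => ?_⟩
  exact hb _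

/-- `ESat E w x i` : the step at time `i` is an honest `E`-step between
`inl`-vertices. -/
def ESat (E : V → C → V → Prop) (w : ℕ → C) (x : ℕ → V ⊕ T) (i : ℕ) : Prop :=
  ∃ a b, x i = Sum.inl a ∧ x (i + 1) = Sum.inl b ∧ E a (w i) b

open Classical in
/-- Positions of "real" steps: advance by 1 on an `E`-step, by 2 on a detour. -/
noncomputable def jfun (p : ℕ → Prop) : ℕ → ℕ
  | 0 => 0
  | (k + 1) => jfun p k + if p (jfun p k) then 1 else 2

open Classical in
lemma jfun_succ (p : ℕ → Prop) (k : ℕ) :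
    jfun p (k + 1) = jfun p k + if p (jfun p k) then 1 else 2 := rfl

lemma jfun_strictMono (p : ℕ → Prop) : StrictMono (jfun p) := by
  apply strictMono_nat_of_lt_succ
  intro n
  rw [jfun_succ]
  split <;> omega

lemma jfun_le (p : ℕ → Prop) (k : ℕ) : k ≤ jfun p k := by
  induction k with
  | zero => simp [jfun]
  | succ n ih => rw [jfun_succ]; split <;> omega

open Classical in
/-- Enumeration of an unbounded predicate. -/
noncomputable def mfun (p : ℕ → Prop) (hp : ∀ n, ∃ k, n ≤ k ∧ p k) : ℕ → ℕ
  | 0 => Nat.find ⟨(hp 0).choose, (hp 0).choose_spec.2⟩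
  | (n + 1) => Nat.find (p := fun k => mfun p hp n < k ∧ p k)
      ⟨(hp (mfun p hp n + 1)).choose,
        (hp (mfun p hp n + 1)).choose_spec.1, (hp (mfun p hp n + 1)).choose_spec.2⟩

open Classical in
lemma mfun_spec (p : ℕ → Prop) (hp : ∀ n, ∃ k, n ≤ k ∧ p k) (n : ℕ) :
    p (mfun p hp n) := by
  cases n with
  | zero => exact Nat.find_spec ⟨(hp 0).choose, (hp 0).choose_spec.2⟩
  | succ n => exact (Nat.find_spec (p := fun k => mfun p hp n < k ∧ p k)
      ⟨(hp (mfun p hp n + 1)).choose,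
        (hp (mfun p hp n + 1)).choose_spec.1, (hp (mfun p hp n + 1)).choose_spec.2⟩).2

open Classical in
lemma mfun_lt (p : ℕ → Prop) (hp : ∀ n, ∃ k, n ≤ k ∧ p k) (n : ℕ) :
    mfun p hp n < mfun p hp (n + 1) :=
  (Nat.find_spec (p := fun k => mfun p hp n < k ∧ p k)
      ⟨(hp (mfun p hp n + 1)).choose,
        (hp (mfun p hp n + 1)).choose_spec.1, (hp (mfun p hp n + 1)).choose_spec.2⟩).1

lemma mfun_strictMono (p : ℕ → Prop) (hp : ∀ n, ∃ k, n ≤ k ∧ p k) :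
    StrictMono (mfun p hp) :=
  strictMono_nat_of_lt_succ (mfun_lt p hp)

open Classical in
lemma mfun_min0 (p : ℕ → Prop) (hp : ∀ n, ∃ k, n ≤ k ∧ p k) (k : ℕ)
    (hk : k < mfun p hp 0) : ¬ p k :=
  Nat.find_min ⟨(hp 0).choose, (hp 0).choose_spec.2⟩ hk

open Classical in
lemma mfun_min (p : ℕ → Prop) (hp : ∀ n, ∃ k, n ≤ k ∧ p k) (n k : ℕ)
    (h1 : mfun p hp n < k) (h2 : k < mfun p hp (n + 1)) : ¬ p k := by
  intro hpk
  exact Nat.find_min (p := fun k => mfun p hp n < k ∧ p k)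
      ⟨(hp (mfun p hp n + 1)).choose,
        (hp (mfun p hp n + 1)).choose_spec.1, (hp (mfun p hp n + 1)).choose_spec.2⟩
      h2 ⟨h1, hpk⟩

open Classical in
lemma mfun_surj (p : ℕ → Prop) (hp : ∀ n, ∃ k, n ≤ k ∧ p k) (k : ℕ) (hk : p k) :
    ∃ n, mfun p hp n = k := by
  have hex : ∃ n, k ≤ mfun p hp n :=
    ⟨k, (mfun_strictMono p hp).le_apply⟩
  set N := Nat.find hex with hN
  have hNk : k ≤ mfun p hp N := Nat.find_spec hex
  cases hN' : N with
  | zero =>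
    rcases eq_or_lt_of_le hNk with h | h
    · exact ⟨N, h.symm⟩
    · exact absurd hk (mfun_min0 p hp k (by rw [← hN']; exact h))
  | succ n =>
    rcases eq_or_lt_of_le hNk with h | h
    · exact ⟨N, h.symm⟩
    · have hn : ¬ k ≤ mfun p hp n := Nat.find_min hex (by omega)
      exact absurd hk (mfun_min p hp n k (by omega) (by rw [← hN']; exact h))

/-- Constancy across a gap with no marked indices. -/
lemma const_of (y : ℕ → V) (p : ℕ → Prop) (h : ∀ k, ¬ p k → y (k + 1) = y k) :
    ∀ k k', k ≤ k' → (∀ l, k ≤ l → l < k' → ¬ p l) → y k' = y k := by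
  intro k k' hle
  induction k' , hle using Nat.le_induction with
  | base => intro; rfl
  | succ n hn ih =>
    intro hgap
    rw [h n (hgap n hn (by omega)), ih fun l h1 h2 => hgap l h1 (by omega)]

lemma jfun_zero (p : ℕ → Prop) : jfun p 0 = 0 := rfl

lemma wcat_ofFn {N : ℕ} (w z : ℕ → C) (i : ℕ) :
    wcat (List.ofFn fun k : Fin N => w k) z i = if i < N then w i else z (i - N) := by
  have hl : (List.ofFn fun k : Fin N => w (k : ℕ)).length = N := List.length_ofFn
  rw [wcat]
  by_cases hi : i < (List.ofFn fun k : Fin N => w (k : ℕ)).length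
  · rw [dif_pos hi, if_pos (by omega)]
    simp [List.get_ofFn]
  · rw [dif_neg hi, if_neg (by omega), hl]

/-- Step condition for the collapse argument: at every `inl`-position, either
an honest `E`-step happens, or a two-step `e`-detour through an `inr`-vertex
returns to the same vertex. -/
def StepOK (e : C) (E : V → C → V → Prop) (w : ℕ → C) (x : ℕ → V ⊕ T) : Prop :=
  ∀ i a, x i = Sum.inl a →
    (∃ b, x (i + 1) = Sum.inl b ∧ E a (w i) b) ∨
    (w i = e ∧ w (i + 1) = e ∧ x (i + 2) = x i ∧ ∃ A, x (i + 1) = Sum.inr A)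

lemma detour_of {e : C} {E : V → C → V → Prop} {w : ℕ → C} {x : ℕ → V ⊕ T}
    (h2 : StepOK e E w x) {i : ℕ} {a : V} (ha : x i = Sum.inl a)
    (hne : ¬ ESat E w x i) :
    w i = e ∧ w (i + 1) = e ∧ x (i + 2) = x i ∧ ∃ A, x (i + 1) = Sum.inr A := by
  rcases h2 i a ha with ⟨b, hb, hEab⟩ | h
  · exact absurd ⟨a, b, ha, hb, hEab⟩ hne
  · exact h

lemma jfun_inl {e : C} {E : V → C → V → Prop} {v₀ : V} {w : ℕ → C} {x : ℕ → V ⊕ T}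
    (h0 : x 0 = Sum.inl v₀) (h2 : StepOK e E w x) :
    ∀ k, ∃ a, x (jfun (ESat E w x) k) = Sum.inl a := by
  intro k
  induction k with
  | zero => exact ⟨v₀, by rw [jfun_zero]; exact h0⟩
  | succ n ih =>
    obtain ⟨a, ha⟩ := ih
    rw [jfun_succ]
    by_cases hp : ESat E w x (jfun (ESat E w x) n)
    · rw [if_pos hp]
      obtain ⟨a', b, _, hb, _⟩ := hp
      exact ⟨b, hb⟩
    · rw [if_neg hp]
      exact ⟨a, ((detour_of h2 ha hp).2.2.1).trans ha⟩

lemma jfun_cov {e : C} {E : V → C → V → Prop} {v₀ : V} {w : ℕ → C} {x : ℕ → V ⊕ T}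
    (h0 : x 0 = Sum.inl v₀) (h2 : StepOK e E w x) :
    ∀ i, ∃ k, i = jfun (ESat E w x) k ∨
      (¬ ESat E w x (jfun (ESat E w x) k) ∧ i = jfun (ESat E w x) k + 1) := by
  have _ := h0; have _ := h2
  intro i; induction i with
  | zero => exact ⟨0, Or.inl (jfun_zero _).symm⟩
  | succ n ih =>
    obtain ⟨k, hk | ⟨hp, hk⟩⟩ := ih
    · by_cases hp : ESat E w x (jfun (ESat E w x) k)
      · exact ⟨k + 1, Or.inl (by rw [jfun_succ, if_pos hp, hk])⟩
      · exact ⟨k, Or.inr ⟨hp, by omega⟩⟩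
    · exact ⟨k + 1, Or.inl (by rw [jfun_succ, if_neg hp]; omega)⟩

lemma collapse_inf (val : (ℕ → C) → X) (e : C)
    (E : V → C → V → Prop) (v₀ : V) (w : ℕ → C) (x : ℕ → V ⊕ T)
    (h0 : x 0 = Sum.inl v₀) (h2 : StepOK e E w x)
    (hinf : ∀ n, ∃ i, n ≤ i ∧ ESat E w x i) :
    ∃ wt, InfPath E v₀ wt ∧ IsEpsInsertion e wt w := by
  classical
  set j := jfun (ESat E w x) with hj
  have hinl : ∀ k, ∃ a, x (j k) = Sum.inl a := jfun_inl h0 h2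
  have hcov : ∀ i, ∃ k, i = j k ∨ (¬ ESat E w x (j k) ∧ i = j k + 1) :=
    jfun_cov h0 h2
  set y : ℕ → V := fun k => Sum.elim id (fun _ => v₀) (x (j k)) with hy
  have hxy : ∀ k, x (j k) = Sum.inl (y k) := by
    intro k; obtain ⟨a, ha⟩ := hinl k
    rw [hy]; simp only [ha, Sum.elim_inl, id]
  set p : ℕ → Prop := fun k => ESat E w x (j k) with hp
  have hstep : ∀ k, p k → E (y k) (w (j k)) (y (k + 1)) ∧ j (k + 1) = j k + 1 := by
    intro k hk
    obtain ⟨a, b, ha, hb, hEab⟩ := id hk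
    have hjk : j (k + 1) = j k + 1 := by
      rw [hj, jfun_succ, if_pos]; exact hk
    have ha' : a = y k := by
      have := hxy k; rw [ha] at this; exact Sum.inl.inj this
    have hb' : b = y (k + 1) := by
      have := hxy (k + 1); rw [hjk, hb] at this; exact Sum.inl.inj this
    exact ⟨ha' ▸ hb' ▸ hEab, hjk⟩
  have hdet' : ∀ k, ¬ p k → y (k + 1) = y k ∧ w (j k) = e ∧ w (j k + 1) = e ∧
      (∃ A, x (j k + 1) = Sum.inr A) ∧ j (k + 1) = j k + 2 := by
    intro k hk
    have hd := detour_of h2 (hxy k) hk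
    have hjk : j (k + 1) = j k + 2 := by
      rw [hj, jfun_succ, if_neg]; exact hk
    refine ⟨?_, hd.1, hd.2.1, hd.2.2.2, hjk⟩
    have := hxy (k + 1); rw [hjk, hd.2.2.1, hxy k] at this
    exact (Sum.inl.inj this).symm
  have hpun : ∀ n, ∃ k, n ≤ k ∧ p k := by
    intro n
    obtain ⟨i, hni, hES⟩ := hinf (j n)
    obtain ⟨k, hk | ⟨hnp, hk⟩⟩ := hcov i
    · refine ⟨k, ?_, by rw [hk] at hES; exact hES⟩
      have hle : j n ≤ j k := by rw [← hk]; exact hni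
      exact (jfun_strictMono (ESat E w x)).le_iff_le.mp hle
    · obtain ⟨a, b, ha, _, _⟩ := hES
      obtain ⟨_, _, _, ⟨A, hA⟩, _⟩ := hdet' k hnp
      rw [hk] at ha; rw [ha] at hA; cases hA
  have hconst := const_of y p (fun k hk => (hdet' k hk).1)
  have hgap : ∀ n, y (mfun p hpun n + 1) = y (mfun p hpun (n + 1)) := by
    intro n
    exact (hconst (mfun p hpun n + 1) (mfun p hpun (n + 1)) (mfun_lt p hpun n)
      (fun l h1 h2' => mfun_min p hpun n l (by omega) h2')).symm
  refine ⟨fun n => w (j (mfun p hpun n)), ⟨fun n => y (mfun p hpun n), ?_, ?_⟩, ?_⟩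
  · have h1 : y (mfun p hpun 0) = y 0 :=
      hconst 0 (mfun p hpun 0) (Nat.zero_le _) (fun l _ hl => mfun_min0 p hpun l hl)
    show y (mfun p hpun 0) = v₀
    rw [h1, hy]
    have : j 0 = 0 := jfun_zero _
    simp only [this, h0, Sum.elim_inl, id]
  · intro n
    show E (y (mfun p hpun n)) (w (j (mfun p hpun n))) (y (mfun p hpun (n + 1)))
    have hE := (hstep (mfun p hpun n) (mfun_spec p hpun n)).1
    rw [← hgap n]
    exact hE
  · refine ⟨fun n => j (mfun p hpun n), (jfun_strictMono _).comp (mfun_strictMono p hpun),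
      fun k => rfl, ?_⟩
    intro i hi
    obtain ⟨k, hk | ⟨hnp, hk⟩⟩ := hcov i
    · by_cases hpk : p k
      · obtain ⟨n, hn⟩ := mfun_surj p hpun k hpk
        exact absurd ⟨n, show j (mfun p hpun n) = i by rw [hn, ← hk]⟩ hi
      · rw [hk]; exact (hdet' k hpk).2.1
    · rw [hk]; exact (hdet' k hnp).2.2.1

lemma collapse_tail {e : C} {E : V → C → V → Prop} {v₀ : V} {w : ℕ → C}
    {x : ℕ → V ⊕ T} (h0 : x 0 = Sum.inl v₀) (h2 : StepOK e E w x)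
    {n : ℕ} (hn : ∀ i, n ≤ i → ¬ ESat E w x i) :
    ∃ N a, x N = Sum.inl a ∧ (∀ i, N ≤ i → w i = e) ∧
      (∀ i a', i < N → x i = Sum.inl a' →
        (∃ b, x (i + 1) = Sum.inl b ∧ E a' (w i) b) ∨
        (w i = e ∧ w (i + 1) = e ∧ x (i + 2) = x i ∧ i + 2 ≤ N ∧
          ∃ A, x (i + 1) = Sum.inr A)) := by
  classical
  set j := jfun (ESat E w x) with hj
  have hinl : ∀ k, ∃ a, x (j k) = Sum.inl a := jfun_inl h0 h2
  have hcov : ∀ i, ∃ k, i = j k ∨ (¬ ESat E w x (j k) ∧ i = j k + 1) :=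
    jfun_cov h0 h2
  obtain ⟨a, ha⟩ := hinl n
  refine ⟨j n, a, ha, ?_, ?_⟩
  · intro i hi
    obtain ⟨k, hk | ⟨hnp, hk⟩⟩ := hcov i
    · obtain ⟨a', ha'⟩ := hinl k
      have hes : ¬ ESat E w x (j k) := by
        apply hn; rw [← hk]
        exact le_trans (jfun_le _ n) hi
      rw [hk]; exact (detour_of h2 ha' hes).1
    · obtain ⟨a', ha'⟩ := hinl k
      rw [hk]; exact (detour_of h2 ha' hnp).2.1
  · intro i a' hiN hia
    obtain ⟨k, hk | ⟨hnp, hk⟩⟩ := hcov i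
    · by_cases hes : ESat E w x i
      · obtain ⟨a'', b, ha'', hb, hEab⟩ := hes
        rw [hia] at ha''
        exact Or.inl ⟨b, hb, (Sum.inl.inj ha'') ▸ hEab⟩
      · have hd := detour_of h2 hia hes
        refine Or.inr ⟨hd.1, hd.2.1, hd.2.2.1, ?_, hd.2.2.2⟩
        have hkn : k < n := by
          have : j k < j n := by rw [← hk]; exact hiN
          exact (jfun_strictMono (ESat E w x)).lt_iff_lt.mp this
        have hjk2 : j (k + 1) = j k + 2 := by
          have hes' : ¬ ESat E w x (jfun (ESat E w x) k) := by
            rw [show jfun (ESat E w x) k = i from hk.symm]; exact hes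
          rw [hj, jfun_succ, if_neg hes']
        have : j (k + 1) ≤ j n := (jfun_strictMono (ESat E w x)).monotone (by omega)
        omega
    · obtain ⟨a'', ha''⟩ := hinl k
      obtain ⟨A, hA⟩ := (detour_of h2 ha'' hnp).2.2.2
      rw [← hk, hia] at hA; cases hA

/-- The main collapse lemma: the value of a word arising from a detour-play
over `E` is at most the value of the start vertex in `E`. -/
lemma collapse (val : (ℕ → C) → X) (e : C) (hsn : StronglyNeutral val e)
    (E : V → C → V → Prop) (hE : NoSinks E) (v₀ : V) (w : ℕ → C) (x : ℕ → V ⊕ T)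
    (h0 : x 0 = Sum.inl v₀) (h2 : StepOK e E w x) :
    val w ≤ vval val E v₀ := by
  classical
  by_cases hinf : ∀ n, ∃ i, n ≤ i ∧ ESat E w x i
  · obtain ⟨wt, hpath, hins⟩ := collapse_inf val e E v₀ w x h0 h2 hinf
    rw [hsn.1 wt w hins]
    exact le_sSup ⟨wt, hpath, rfl⟩
  · push_neg at hinf
    obtain ⟨n, hn⟩ := hinf
    have hn' : ∀ i, n ≤ i → ¬ ESat E w x i := hn
    obtain ⟨N, a, haN, htail, hres⟩ := collapse_tail h0 h2 hn'
    obtain ⟨ρ, z, hρ0, hρ⟩ := exists_infPath_s8 E hE a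
    set x' : ℕ → V ⊕ T := fun i => if i < N then x i else Sum.inl (ρ (i - N)) with hx'
    set w' : ℕ → C := fun i => if i < N then w i else z (i - N) with hw'
    have hagree : ∀ i, i ≤ N → x' i = x i := by
      intro i hi
      rw [hx']; dsimp only
      rcases lt_or_eq_of_le hi with h | h
      · rw [if_pos h]
      · rw [h, if_neg (lt_irrefl N), Nat.sub_self, hρ0, haN]
    have h0' : x' 0 = Sum.inl v₀ := by rw [hagree 0 (Nat.zero_le N)]; exact h0
    have h2' : StepOK e E w' x' := by
      intro i a' hia
      by_cases hi : i < N
      · rw [hagree i (le_of_lt hi)] at hia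
        rcases hres i a' hi hia with ⟨b, hb, hEab⟩ | ⟨he1, he2, hx2, hle, A, hA⟩
        · refine Or.inl ⟨b, ?_, ?_⟩
          · rw [hagree (i + 1) (by omega), hb]
          · rw [hw']; dsimp only; rw [if_pos hi]; exact hEab
        · refine Or.inr ⟨?_, ?_, ?_, A, ?_⟩
          · rw [hw']; dsimp only; rw [if_pos hi]; exact he1
          · rw [hw']; dsimp only; rw [if_pos (show i + 1 < N by omega)]; exact he2
          · rw [hagree (i + 2) hle, hagree i (le_of_lt hi), hx2]
          · rw [hagree (i + 1) (by omega), hA]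
      · refine Or.inl ⟨ρ (i - N + 1), ?_, ?_⟩
        · rw [hx']; dsimp only
          rw [if_neg (show ¬ i + 1 < N by omega)]
          have harith : i + 1 - N = i - N + 1 := by omega
          rw [harith]
        · have ha' : a' = ρ (i - N) := by
            rw [hx'] at hia; dsimp only at hia
            rw [if_neg hi] at hia
            exact (Sum.inl.inj hia).symm
          rw [ha', hw']; dsimp only; rw [if_neg hi]
          exact hρ (i - N)
    have hinf' : ∀ k, ∃ i, k ≤ i ∧ ESat E w' x' i := by
      intro k
      refine ⟨max k N, le_max_left _ _, ρ (max k N - N), ρ (max k N - N + 1), ?_, ?_, ?_⟩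
      · rw [hx']; dsimp only; rw [if_neg (by omega)]
      · rw [hx']; dsimp only; rw [if_neg (by omega)]
        congr 2; omega
      · rw [hw']; dsimp only; rw [if_neg (by omega)]
        exact hρ _
    obtain ⟨wt, hpath, hins⟩ := collapse_inf val e E v₀ w' x' h0' h2' hinf'
    have hweq : w = wcat (List.ofFn fun k : Fin N => w k) (fun _ => e) := by
      funext i
      rw [wcat_ofFn]
      by_cases hi : i < N
      · rw [if_pos hi]
      · rw [if_neg hi]
        exact htail i (by omega)
    have hw'eq : wcat (List.ofFn fun k : Fin N => w k) z = w' := by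
      funext i
      rw [wcat_ofFn, hw']
    calc val w = val (wcat (List.ofFn fun k : Fin N => w k) (fun _ => e)) := by
          rw [← hweq]
      _ = ⨅ z' : ℕ → C, val (wcat (List.ofFn fun k : Fin N => w k) z') :=
          hsn.2 (List.ofFn fun k : Fin N => w k)
      _ ≤ val (wcat (List.ofFn fun k : Fin N => w k) z) := iInf_le _ z
      _ = val w' := by rw [hw'eq]
      _ = val wt := hsn.1 wt w' hins
      _ ≤ vval val E v₀ := le_sSup ⟨wt, hpath, rfl⟩

end Aux

/-- Histories of the "return" strategy for Eve in `𝒢'` : Adam moves freely,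
and from a subset-vertex Eve moves back to the vertex from which the subset
was entered. -/
inductive Good {C : Type} {V : Type u} (E : V → C → V → Prop) (e : C) (v₀ : V) :
    List (C × (V ⊕ {A : Set V // A.Nonempty})) → Prop
  | nil : Good E e v₀ []
  | estep (π) (x : V) (c : C) (y : V) : Good E e v₀ π →
      lastV (Sum.inl v₀) π = Sum.inl x → E x c y →
      Good E e v₀ ((c, Sum.inl y) :: π)
  | enter (π) (x : V) (A : {A : Set V // A.Nonempty}) : Good E e v₀ π →
      lastV (Sum.inl v₀) π = Sum.inl x → x ∈ A.val →
      Good E e v₀ ((e, Sum.inr A) :: π)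
  | exit (π) (x : V) (A : {A : Set V // A.Nonempty}) :
      Good E e v₀ ((e, Sum.inr A) :: π) →
      lastV (Sum.inl v₀) π = Sum.inl x → x ∈ A.val →
      Good E e v₀ ((e, Sum.inl x) :: (e, Sum.inr A) :: π)

section Strat

variable {C X : Type} {V : Type u} [CompleteLinearOrder X]

lemma good_tail {E : V → C → V → Prop} {e : C} {v₀ : V}
    {p : C × (V ⊕ {A : Set V // A.Nonempty})} {π}
    (hg : Good E e v₀ (p :: π)) : Good E e v₀ π := by
  cases hg with
  | estep _ _ _ _ hπ _ _ => exact hπ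
  | enter _ _ _ hπ _ _ => exact hπ
  | exit _ _ _ hπ _ _ => exact hπ

lemma good_cons_inv {E : V → C → V → Prop} {e : C} {v₀ : V} {c : C}
    {t : V ⊕ {A : Set V // A.Nonempty}} {π} (hg : Good E e v₀ ((c, t) :: π)) :
    (∃ x y, lastV (Sum.inl v₀) π = Sum.inl x ∧ t = Sum.inl y ∧ E x c y) ∨
    (∃ x A, c = e ∧ t = Sum.inr A ∧ lastV (Sum.inl v₀) π = Sum.inl x ∧ x ∈ A.val) ∨
    (∃ x A π'', c = e ∧ t = Sum.inl x ∧ π = (e, Sum.inr A) :: π'' ∧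
      lastV (Sum.inl v₀) π'' = Sum.inl x ∧ x ∈ A.val) := by
  cases hg with
  | estep _ x _ y hπ hl hE => exact Or.inl ⟨x, y, hl, rfl, hE⟩
  | enter _ x A hπ hl hx => exact Or.inr (Or.inl ⟨x, A, rfl, rfl, hl, hx⟩)
  | exit π'' x A hπ hl hx => exact Or.inr (Or.inr ⟨x, A, π'', rfl, rfl, rfl, hl, hx⟩)

lemma good_valid {E : V → C → V → Prop} {e : C} {v₀ : V} {π}
    (hg : Good E e v₀ π) : ValidPath (gameE E e) (Sum.inl v₀) π := by
  induction hg with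
  | nil => trivial
  | estep π x c y hπ hl hE ih =>
    exact ⟨ih, by rw [hl]; exact hE⟩
  | enter π x A hπ hl hx ih =>
    exact ⟨ih, by rw [hl]; exact ⟨rfl, hx⟩⟩
  | exit π x A hπ hl hx ih =>
    exact ⟨ih, ⟨rfl, hx⟩⟩

/-- The "always return" strategy for Eve in `𝒢'`. -/
def retStrategy (E : V → C → V → Prop) (hE : NoSinks E) (e : C) (v₀ : V) :
    Strategy (gameE E e)
      (Set.range (Sum.inr : {A : Set V // A.Nonempty} → V ⊕ {A : Set V // A.Nonempty}))
      (Sum.inl v₀) where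
  H := {π | Good E e v₀ π}
  F := fun π c π' => Good E e v₀ π' ∧ ∃ t, π' = (c, t) :: π
  valid := fun _ hπ => good_valid hπ
  nil_mem := Good.nil
  F_sub := by
    rintro π c π' ⟨hg, t, ht⟩
    refine ⟨?_, hg, t, ht⟩
    subst ht
    exact good_tail hg
  no_sink := by
    intro π hπ
    cases hl : lastV (Sum.inl v₀) π with
    | inl a =>
      obtain ⟨c, b, hb⟩ := hE a
      exact ⟨c, (c, Sum.inl b) :: π, Good.estep π a c b hπ hl hb, Sum.inl b, rfl⟩
    | inr A =>
      cases hπ' : π with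
      | nil =>
        rw [hπ'] at hl
        cases hl
      | cons p π'' =>
        obtain ⟨c', t'⟩ := p
        rw [hπ'] at hl hπ
        have ht' : t' = Sum.inr A := hl
        subst ht'
        rcases good_cons_inv hπ with ⟨x1, y1, _, hty, _⟩ | ⟨x1, A1, hc1, htA, hl1, hx1⟩ |
          ⟨x1, A1, π3, _, hty, _, _, _⟩
        · cases hty
        · injection htA with hAA
          subst hAA
          rw [hc1] at hπ
          rw [hc1]
          exact ⟨e, (e, Sum.inl x1) :: (e, Sum.inr A) :: π'',
            Good.exit π'' x1 A hπ hl1 hx1, Sum.inl x1, rfl⟩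
        · cases hty
  adam_closed := by
    intro π hπ hadam c t hedge
    cases hl : lastV (Sum.inl v₀) π with
    | inr A =>
      refine absurd ?_ hadam
      rw [hl]
      exact Set.mem_range_self A
    | inl x =>
      rw [hl] at hedge
      cases t with
      | inl y =>
        have hgood : Good E e v₀ ((c, Sum.inl y) :: π) :=
          Good.estep π x c y hπ hl hedge
        exact ⟨hgood, hgood, Sum.inl y, rfl⟩
      | inr A =>
        obtain ⟨hc, hx⟩ := hedge
        have hgood : Good E e v₀ ((c, Sum.inr A) :: π) := by
          rw [hc]
          exact Good.enter π x A hπ hl hx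
        exact ⟨hgood, hgood, Sum.inr A, rfl⟩

lemma retStrategy_value_le (val : (ℕ → C) → X) (e : C) (hsn : StronglyNeutral val e)
    (E : V → C → V → Prop) (hE : NoSinks E) (v₀ : V) :
    (retStrategy E hE e v₀).value val ≤ vval val E v₀ := by
  apply sSup_le
  rintro _ ⟨w, ⟨ρ, hρ0, hρ⟩, rfl⟩
  set x : ℕ → V ⊕ {A : Set V // A.Nonempty} :=
    fun i => lastV (Sum.inl v₀) (ρ i) with hxdef
  have hgood : ∀ i, Good E e v₀ (ρ i) := by
    intro i
    induction i with
    | zero => rw [hρ0]; exact Good.nil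
    | succ n _ => exact (hρ n).1
  have hcons : ∀ i, ρ (i + 1) = (w i, x (i + 1)) :: ρ i := by
    intro i
    obtain ⟨t, ht⟩ := (hρ i).2
    rw [ht]
    have : x (i + 1) = t := by rw [hxdef]; dsimp only; rw [ht]; rfl
    rw [this]
  have h0 : x 0 = Sum.inl v₀ := by rw [hxdef]; dsimp only; rw [hρ0]; rfl
  have h2 : StepOK e E w x := by
    intro i a hia
    have hg1 : Good E e v₀ ((w i, x (i + 1)) :: ρ i) := by
      rw [← hcons i]; exact hgood (i + 1)
    rcases good_cons_inv hg1 with ⟨x1, y, hl, ht, hEe⟩ | ⟨x1, A, hc, ht, hl, hx1⟩ |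
      ⟨x1, A, π'', hc, ht, hπ, hl, hx1⟩
    · have hl' : x i = Sum.inl x1 := hl
      rw [hia] at hl'
      exact Or.inl ⟨y, ht, (Sum.inl.inj hl') ▸ hEe⟩
    · -- detour entered at step i
      have hg2 : Good E e v₀ ((w (i + 1), x (i + 2)) :: ρ (i + 1)) := by
        rw [← hcons (i + 1)]; exact hgood (i + 2)
      rcases good_cons_inv hg2 with ⟨x2, y2, hl2, ht2, _⟩ | ⟨x2, A2, _, _, hl2, _⟩ |
        ⟨x2, A2, π2, hc2, ht2, hπ2, hl2, hx2⟩
      · have : x (i + 1) = Sum.inl x2 := hl2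
        rw [ht] at this; cases this
      · have : x (i + 1) = Sum.inl x2 := hl2
        rw [ht] at this; cases this
      · have hπ2' : ρ (i + 1) = (e, Sum.inr A2) :: π2 := hπ2
        rw [hcons i] at hπ2'
        have hπeq : π2 = ρ i := ((List.cons.injEq _ _ _ _ ▸ hπ2').2).symm
        have hl2' : x i = Sum.inl x2 := by
          show lastV (Sum.inl v₀) (ρ i) = Sum.inl x2
          rw [← hπeq]; exact hl2
        rw [hia] at hl2'
        refine Or.inr ⟨hc, hc2, ?_, A, ht⟩
        rw [ht2, hia, Sum.inl.inj hl2']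
    · have : x i = Sum.inr A := by
        rw [hxdef]; dsimp only; rw [hπ]; rfl
      rw [hia] at this; cases this
  exact collapse val e hsn E hE v₀ w x h0 h2

lemma gameValue_inl_le (val : (ℕ → C) → X) (e : C) (hsn : StronglyNeutral val e)
    (E : V → C → V → Prop) (hE : NoSinks E) (v₀ : V) :
    gameValue val (gameE E e) (Set.range Sum.inr) (Sum.inl v₀) ≤ vval val E v₀ :=
  le_trans (iInf_le _ (retStrategy E hE e v₀))
    (retStrategy_value_le val e hsn E hE v₀)

/-- Lifting a path of `G''` to a play of `𝒢'` consistent with `P'`. -/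
lemma lift_path (e : C) (E : V → C → V → Prop)
    (P' : PosStrategy (gameE E e) (Set.range Sum.inr))
    (v : V) (w : ℕ → C) (ρ : ℕ → V) (hρ0 : ρ 0 = v)
    (hstep : ∀ k, augE E e P' (ρ k) (w k) (ρ (k + 1))) :
    ∃ w', IsEpsInsertion e w w' ∧ InfPath P'.F (Sum.inl v) w' := by
  classical
  set D : ℕ → Prop := fun k => E (ρ k) (w k) (ρ (k + 1)) with hDdef
  have hAex : ∀ k, ¬ D k → w k = e ∧ ∃ A : {A : Set V // A.Nonempty},
      ρ k ∈ A.val ∧ ρ (k + 1) ∈ A.val ∧ P'.F (Sum.inr A) e (Sum.inl (ρ (k + 1))) := by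
    intro k hk
    rcases hstep k with h | ⟨hc, A, h1, h2, h3⟩
    · exact absurd h hk
    · exact ⟨hc, A, h1, h2, h3⟩
  set As : ℕ → {A : Set V // A.Nonempty} := fun k =>
    if hk : D k then ⟨{ρ k}, Set.singleton_nonempty _⟩ else ((hAex k hk).2).choose
    with hAsdef
  have hAs : ∀ k, ¬ D k → w k = e ∧ ρ k ∈ (As k).val ∧ ρ (k + 1) ∈ (As k).val ∧
      P'.F (Sum.inr (As k)) e (Sum.inl (ρ (k + 1))) := by
    intro k hk
    have : As k = ((hAex k hk).2).choose := by
      rw [hAsdef]; dsimp only; rw [dif_neg hk]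
    rw [this]
    exact ⟨(hAex k hk).1, ((hAex k hk).2).choose_spec⟩
  set d : ℕ → ℕ := fun k => if D k then 1 else 2 with hddef
  have hd1 : ∀ k, 1 ≤ d k := by
    intro k; rw [hddef]; dsimp only; split <;> omega
  have hd2 : ∀ k, d k ≤ 2 := by
    intro k; rw [hddef]; dsimp only; split <;> omega
  have hdD : ∀ k, D k → d k = 1 := by
    intro k hk; rw [hddef]; dsimp only; rw [if_pos hk]
  have hdnD : ∀ k, ¬ D k → d k = 2 := by
    intro k hk; rw [hddef]; dsimp only; rw [if_neg hk]
  set t : ℕ → ℕ := fun n => ∑ i ∈ Finset.range n, d i with htdef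
  have ht0 : t 0 = 0 := rfl
  have htsucc : ∀ n, t (n + 1) = t n + d n := by
    intro n; rw [htdef]; exact Finset.sum_range_succ d n
  have htmono : StrictMono t := by
    apply strictMono_nat_of_lt_succ
    intro n; rw [htsucc]; have := hd1 n; omega
  have htge : ∀ n, n ≤ t n := fun n => htmono.le_apply
  have hgex : ∀ j, ∃ k, j < t k := fun j => ⟨j + 1, by have := htge (j + 1); omega⟩
  set g : ℕ → ℕ := fun j => Nat.find (hgex j) - 1 with hgdef
  have hg : ∀ j, t (g j) ≤ j ∧ j < t (g j + 1) := by
    intro j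
    have h1 : j < t (Nat.find (hgex j)) := Nat.find_spec (hgex j)
    have hN0 : Nat.find (hgex j) ≠ 0 := by
      intro h; rw [h, ht0] at h1; omega
    constructor
    · by_contra hcon
      push_neg at hcon
      exact Nat.find_min (hgex j) (by omega : Nat.find (hgex j) - 1 < Nat.find (hgex j)) hcon
    · rw [hgdef]; dsimp only
      rw [show Nat.find (hgex j) - 1 + 1 = Nat.find (hgex j) by omega]
      exact h1
  have hguniq : ∀ j k, t k ≤ j → j < t (k + 1) → g j = k := by
    intro j k hk1 hk2
    obtain ⟨hgl, hgu⟩ := hg j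
    rcases lt_trichotomy (g j) k with h | h | h
    · have : t (g j + 1) ≤ t k := htmono.monotone (by omega)
      omega
    · exact h
    · have : t (k + 1) ≤ t (g j) := htmono.monotone (by omega)
      omega
  set x' : ℕ → V ⊕ {A : Set V // A.Nonempty} := fun j =>
    if j = t (g j) then Sum.inl (ρ (g j)) else Sum.inr (As (g j)) with hx'def
  have hgat : ∀ k, g (t k) = k := by
    intro k
    exact hguniq (t k) k le_rfl (by rw [htsucc]; have := hd1 k; omega)
  have hx'at : ∀ k, x' (t k) = Sum.inl (ρ k) := by
    intro k
    rw [hx'def]; dsimp only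
    rw [hgat k, if_pos rfl]
  have hgmid : ∀ k, d k = 2 → g (t k + 1) = k := by
    intro k hdk
    exact hguniq (t k + 1) k (by omega) (by rw [htsucc]; omega)
  have hx'mid : ∀ k, d k = 2 → x' (t k + 1) = Sum.inr (As k) := by
    intro k hdk
    rw [hx'def]; dsimp only
    rw [hgmid k hdk, if_neg (by omega)]
  refine ⟨fun j => w (g j), ⟨fun n => t (n + 1) - 1, ?_, ?_, ?_⟩, fun n => x' n, ?_, ?_⟩
  · -- strict monotonicity of σ
    apply strictMono_nat_of_lt_succ
    intro n
    have h1 := htsucc (n + 1)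
    have h2 := hd1 (n + 1)
    have h3 := htmono (show n + 1 < n + 2 by omega)
    have h4 := hd1 n
    have h5 := htsucc n
    omega
  · -- w' (σ n) = w n
    intro k
    have : g (t (k + 1) - 1) = k := by
      apply hguniq
      · rw [htsucc]; have := hd1 k; omega
      · have := hd1 k; have := htsucc k; omega
    dsimp only
    rw [this]
  · -- off-range positions are e
    intro i hi
    have hk := hg i
    set k := g i with hkdef
    have hne : t (k + 1) - 1 ≠ i := by
      intro h
      exact hi ⟨k, h⟩
    have hdk : d k = 2 := by
      have h1 := htsucc k
      have h2 := hd1 k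
      have h3 := hd2 k
      omega
    have hnD : ¬ D k := by
      intro h; rw [hdD k h] at hdk; omega
    show w (g i) = e
    rw [← hkdef]
    exact (hAs k hnD).1
  · -- start of the lifted path
    show x' 0 = Sum.inl v
    have := hx'at 0
    rw [ht0] at this
    rw [this, hρ0]
  · -- edges of the lifted path
    intro j
    show P'.F (x' j) (w (g j)) (x' (j + 1))
    obtain ⟨hgl, hgu⟩ := hg j
    have hts := htsucc (g j)
    have hd1' := hd1 (g j)
    have hd2' := hd2 (g j)
    rcases eq_or_lt_of_le hgl with hj | hj
    · -- j = t (g j)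
      by_cases hD : D (g j)
      · have hdk := hdD _ hD
        have hj1 : j + 1 = t (g j + 1) := by omega
        have hx1 : x' j = Sum.inl (ρ (g j)) := by
          conv_lhs => rw [← hj]
          exact hx'at (g j)
        have hx2 : x' (j + 1) = Sum.inl (ρ (g j + 1)) := by
          conv_lhs => rw [hj1]
          exact hx'at (g j + 1)
        rw [hx1, hx2]
        show P'.F (Sum.inl (ρ (g j))) (w (g j)) (Sum.inl (ρ (g j + 1)))
        apply P'.adam_all
        · simp
        · exact hD
      · have hdk := hdnD _ hD
        have hAspec := hAs _ hD
        have hx1 : x' j = Sum.inl (ρ (g j)) := by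
          conv_lhs => rw [← hj]
          exact hx'at (g j)
        have hx2 : x' (j + 1) = Sum.inr (As (g j)) := by
          conv_lhs => rw [show j + 1 = t (g j) + 1 by omega]
          exact hx'mid (g j) hdk
        rw [hx1, hx2]
        show P'.F (Sum.inl (ρ (g j))) (w (g j)) (Sum.inr (As (g j)))
        rw [hAspec.1]
        apply P'.adam_all
        · simp
        · exact ⟨rfl, hAspec.2.1⟩
    · -- j = t (g j) + 1, necessarily d (g j) = 2
      have hdk : d (g j) = 2 := by omega
      have hj' : j = t (g j) + 1 := by omega
      have hnD : ¬ D (g j) := by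
        intro h; rw [hdD _ h] at hdk; omega
      have hAspec := hAs _ hnD
      have hx1 : x' j = Sum.inr (As (g j)) := by
        conv_lhs => rw [hj']
        exact hx'mid (g j) hdk
      have hx2 : x' (j + 1) = Sum.inl (ρ (g j + 1)) := by
        conv_lhs => rw [show j + 1 = t (g j + 1) by omega]
        exact hx'at (g j + 1)
      rw [hx1, hx2]
      show P'.F (Sum.inr (As (g j))) (w (g j)) (Sum.inl (ρ (g j + 1)))
      rw [hAspec.1]
      exact hAspec.2.2.2

end Strat

/-- Lemma 5.5, first step.  Given an optimal positional
strategy `P'` in `𝒢'`, the identity is a `val`-preserving morphism from `G`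
to `G''`, and `G''` has sufficiently many `e`-edges. -/
theorem stmt8 {C X : Type} {V : Type u} [CompleteLinearOrder X]
    (val : (ℕ → C) → X) (e : C) (hpos : Positional.{u} val)
    (hsn : StronglyNeutral val e)
    (E : V → C → V → Prop) (hE : NoSinks E)
    (P' : PosStrategy (gameE E e) (Set.range Sum.inr)) (hopt : P'.Optimal val) :
    ValPreserving val E (augE E e P') (id : V → V) ∧ SuffEps (augE E e P') e := by
  refine ⟨⟨fun a c b h => Or.inl h, ?_⟩, ?_⟩
  · intro a
    show vval val (augE E e P') a = vval val E a
    apply le_antisymm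
    · apply sSup_le
      rintro _ ⟨w, ⟨ρ, hρ0, hρ⟩, rfl⟩
      obtain ⟨w', hins, hpath'⟩ := lift_path e E P' a w ρ hρ0 hρ
      calc val w = val w' := (hsn.1 w w' hins).symm
        _ ≤ vval val P'.F (Sum.inl a) := le_sSup ⟨w', hpath', rfl⟩
        _ = gameValue val (gameE E e) (Set.range Sum.inr) (Sum.inl a) :=
            hopt (Sum.inl a)
        _ ≤ vval val E a := gameValue_inl_le val e hsn E hE a
    · apply sSup_le
      rintro _ ⟨w, ⟨ρ, hρ0, hρ⟩, rfl⟩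
      exact le_sSup ⟨w, ⟨ρ, hρ0, fun i => Or.inl (hρ i)⟩, rfl⟩
  · intro A hA
    obtain ⟨c, t, hF⟩ := P'.no_sink (Sum.inr ⟨A, hA⟩)
    have hsub := P'.sub hF
    cases t with
    | inr B => exact hsub.elim
    | inl b =>
      obtain ⟨hc, hb⟩ := hsub
      refine ⟨b, hb, fun v' hv' => Or.inr ⟨rfl, ⟨A, hA⟩, hv', hb, ?_⟩⟩
      rw [hc] at hF
      exact hF
end
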